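/- Let the setting be type A_N or type B_N, let (i_t,k_t), 1 ≤ t ≤ T, be a snake, and let (p_1,…,p_T) ∈ P̄_{(i_t,k_t)}. Suppose p_t can be lowered at (j,ℓ) ∈ W; then the tuple obtained by replacing p_t with p_t𝒜_{j,ℓ}⁻¹ fails to be non-overlapping if and only if there exists s with t < s ≤ T such that p_s has an upper corner at (j,ℓ+r_j) or a lower corner at (j,ℓ−r_j). Similarly, suppose p_t can be raised at (j,ℓ) ∈ W; then the tuple obtained by replacing p_t with p_t𝒜_{j,ℓ} fails to be non-overlapping if and only if there exists s with 1 ≤ s < t such that p_s has a lower corner at (j,ℓ−r_j) or an upper corner at (j,ℓ+r_j). -/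

import Mathlib

namespace Paper

/-- The ambient setting: type `A N` (with `N ≥ 1`) or type `B N ε`
(with `N ≥ 2` and `0 < ε < 1/2`). -/
inductive Setting where
  | A (N : ℕ)
  | B (N : ℕ) (ε : ℝ)

namespace Setting

/-- The rank `N`. -/
def N : Setting → ℕ
  | A n => n
  | B n _ => n

/-- Validity of the parameters of the setting. -/
def valid : Setting → Prop
  | A n => 1 ≤ n
  | B n ε => 2 ≤ n ∧ 0 < ε ∧ ε < 1 / 2

end Setting

/-- The numbers `r_i` : in type A all equal `1`; in type B, `r_N = 1` and `r_i = 2` for `i < N`. -/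
def rr : Setting → ℕ → ℕ
  | .A _, _ => 1
  | .B n _, j => if j = n then 1 else 2

/-- The set `X` in type `A_N`. -/
def XA (n : ℕ) : Set (ℕ × ℤ) :=
  {ik | 1 ≤ ik.1 ∧ ik.1 ≤ n ∧ ((ik.1 : ℤ) - ik.2) % 2 = 1}

/-- The set `X` in type `B_N`. -/
def XB (n : ℕ) : Set (ℕ × ℤ) :=
  {ik | (ik.1 = n ∧ ik.2 % 2 = 1) ∨ (1 ≤ ik.1 ∧ ik.1 < n ∧ ik.2 % 2 = 0)}

/-- The set `X ⊆ I × ℤ`. -/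
def X : Setting → Set (ℕ × ℤ)
  | .A n => XA n
  | .B n _ => XB n

/-- The set `W = {(i,k) : (i, k - r_i) ∈ X}`. -/
def W (S : Setting) : Set (ℕ × ℤ) :=
  {ik | (ik.1, ik.2 - (rr S ik.1 : ℤ)) ∈ X S}

/-- The `r`-th point of a path (a finite list of points of the plane). -/
def pt (p : List (ℝ × ℝ)) (r : ℕ) : ℝ × ℝ := p.getD r (0, 0)

/-- The set of paths `𝒫_{i,k}` in type `A_N`. -/
def pathsA (n : ℕ) (i : ℕ) (k : ℤ) : Set (List (ℝ × ℝ)) :=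
  {p | p.length = n + 2 ∧
    (∀ r, r < n + 2 → (pt p r).1 = (r : ℝ)) ∧
    (pt p 0).2 = (i : ℝ) + (k : ℝ) ∧
    (pt p (n + 1)).2 = (n : ℝ) + 1 - (i : ℝ) + (k : ℝ) ∧
    (∀ r, r ≤ n → (pt p (r + 1)).2 - (pt p r).2 = 1 ∨ (pt p (r + 1)).2 - (pt p r).2 = -1)}

/-- The set of paths `𝒫_{N,ℓ}` in type `B_N`. -/
def pathsBspin (n : ℕ) (ε : ℝ) (l : ℤ) : Set (List (ℝ × ℝ)) :=
  {p | p.length = n + 1 ∧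
    (if l % 4 = 3 then ∀ r, r < n → (pt p r).1 = 2 * (r : ℝ)
     else ∀ r, r < n → (pt p r).1 = 4 * (n : ℝ) - 2 - 2 * (r : ℝ)) ∧
    (pt p n).1 = 2 * (n : ℝ) - 1 ∧
    (pt p 0).2 = (l : ℝ) + 2 * (n : ℝ) - 1 ∧
    (∀ r, r + 2 ≤ n → (pt p (r + 1)).2 - (pt p r).2 = 2 ∨ (pt p (r + 1)).2 - (pt p r).2 = -2) ∧
    ((pt p n).2 - (pt p (n - 1)).2 = 1 + ε ∨ (pt p n).2 - (pt p (n - 1)).2 = -(1 + ε))}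

/-- The set of paths `𝒫_{i,k}` in type `B_N`. -/
def pathsB (n : ℕ) (ε : ℝ) (i : ℕ) (k : ℤ) : Set (List (ℝ × ℝ)) :=
  if i = n then pathsBspin n ε k
  else {p | ∃ a b : List (ℝ × ℝ),
    a ∈ pathsBspin n ε (k - (2 * (n : ℤ) - 2 * (i : ℤ) - 1)) ∧
    b ∈ pathsBspin n ε (k + (2 * (n : ℤ) - 2 * (i : ℤ) - 1)) ∧
    p = a ++ b.reverse ∧
    (pt a n).1 = (pt b n).1 ∧ 0 < (pt a n).2 - (pt b n).2}

/-- The set of paths `𝒫_{i,k}`. -/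
def P : Setting → ℕ → ℤ → Set (List (ℝ × ℝ))
  | .A n => pathsA n
  | .B n ε => pathsB n ε

/-- The map `ι : X → ℤ × ℤ` of type `B_N`. -/
def iotaB (n : ℕ) (ik : ℕ × ℤ) : ℤ × ℤ :=
  if ik.1 = n then (2 * (n : ℤ) - 1, ik.2)
  else if (2 * (n : ℤ) + ik.2 - 2 * (ik.1 : ℤ)) % 4 = 2 then (2 * (ik.1 : ℤ), ik.2)
  else (4 * (n : ℤ) - 2 - 2 * (ik.1 : ℤ), ik.2)

/-- The corners of a path: `Cp S p true` is the set `C_{p,+}` of upper corners, and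
`Cp S p false` is the set `C_{p,-}` of lower corners. -/
def Cp (S : Setting) (p : List (ℝ × ℝ)) (up : Bool) : Set (ℕ × ℤ) :=
  match S with
  | .A n =>
    {jl | 1 ≤ jl.1 ∧ jl.1 ≤ n ∧
      pt p jl.1 = ((jl.1 : ℝ), (jl.2 : ℝ)) ∧
      (pt p (jl.1 - 1)).2 = (jl.2 : ℝ) + (if up then 1 else -1) ∧
      (pt p (jl.1 + 1)).2 = (jl.2 : ℝ) + (if up then 1 else -1)}
  | .B n ε =>
    {jl | jl ∈ XB n ∧
      ((∃ r : ℕ, 1 ≤ r ∧ r + 1 < p.length ∧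
          pt p r = (((iotaB n jl).1 : ℝ), ((iotaB n jl).2 : ℝ)) ∧
          (iotaB n jl).1 ≠ 0 ∧ (iotaB n jl).1 ≠ 2 * (n : ℤ) - 1 ∧
          (iotaB n jl).1 ≠ 4 * (n : ℤ) - 2 ∧
          (if up then (pt p r).2 < (pt p (r - 1)).2 ∧ (pt p r).2 < (pt p (r + 1)).2
           else (pt p (r - 1)).2 < (pt p r).2 ∧ (pt p (r + 1)).2 < (pt p r).2))
       ∨ (jl.1 = n ∧
          (if up then (2 * (n : ℝ) - 1, (jl.2 : ℝ) - ε) ∈ p ∧ (2 * (n : ℝ) - 1, (jl.2 : ℝ) + ε) ∉ p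
           else (2 * (n : ℝ) - 1, (jl.2 : ℝ) + ε) ∈ p ∧ (2 * (n : ℝ) - 1, (jl.2 : ℝ) - ε) ∉ p)))}

/-- `p'` is obtained from `p` by replacing the point `q` by the point `q'`. -/
def Replace1 (p p' : List (ℝ × ℝ)) (q q' : ℝ × ℝ) : Prop :=
  ∃ r : ℕ, r < p.length ∧ pt p r = q ∧ p'.length = p.length ∧ pt p' r = q' ∧
    ∀ s, s < p.length → s ≠ r → pt p' s = pt p s

/-- `p'` is obtained from `p` by replacing the point `q1` by `q1'` and the point `q2` by `q2'`. -/
def Replace2 (p p' : List (ℝ × ℝ)) (q1 q1' q2 q2' : ℝ × ℝ) : Prop :=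
  ∃ r s : ℕ, r < p.length ∧ s < p.length ∧ r ≠ s ∧ pt p r = q1 ∧ pt p s = q2 ∧
    p'.length = p.length ∧ pt p' r = q1' ∧ pt p' s = q2' ∧
    ∀ u, u < p.length → u ≠ r → u ≠ s → pt p' u = pt p u

/-- The path `p` can be lowered at `(j, l)`: `(j, l - r_j) ∈ C_{p,+}` and
`(j, l + r_j) ∉ C_{p,+}`. -/
def CanLower (S : Setting) (p : List (ℝ × ℝ)) (j : ℕ) (l : ℤ) : Prop :=
  (j, l - (rr S j : ℤ)) ∈ Cp S p true ∧ (j, l + (rr S j : ℤ)) ∉ Cp S p true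

/-- `p'` is the result of the lowering move at `(j,l)` applied to the path `p ∈ 𝒫_{i,k}`;
written `p' = p 𝒜_{j,l}⁻¹`. -/
def LoweredTo (S : Setting) (i : ℕ) (k : ℤ) (j : ℕ) (l : ℤ)
    (p p' : List (ℝ × ℝ)) : Prop :=
  p ∈ P S i k ∧ p' ∈ P S i k ∧ CanLower S p j l ∧
  (match S with
   | .A _ => Replace1 p p' ((j : ℝ), (l : ℝ) - 1) ((j : ℝ), (l : ℝ) + 1)
   | .B n ε =>
     if j = n then
       Replace1 p p' (2 * (n : ℝ) - 1, (l : ℝ) - 1 - ε) (2 * (n : ℝ) - 1, (l : ℝ) + 1 + ε)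
     else if j = n - 1 then
       Replace2 p p'
         (((iotaB n (j, l - 2)).1 : ℝ), (l : ℝ) - 2) (((iotaB n (j, l - 2)).1 : ℝ), (l : ℝ) + 2)
         (2 * (n : ℝ) - 1, (l : ℝ) - 1 + ε) (2 * (n : ℝ) - 1, (l : ℝ) + 1 - ε)
     else
       Replace1 p p'
         (((iotaB n (j, l - 2)).1 : ℝ), (l : ℝ) - 2) (((iotaB n (j, l - 2)).1 : ℝ), (l : ℝ) + 2))

/-- The path `p` can be raised at `(j,l)`: it is of the form `p' 𝒜_{j,l}⁻¹`. -/
def CanRaise (S : Setting) (i : ℕ) (k : ℤ) (p : List (ℝ × ℝ)) (j : ℕ) (l : ℤ) : Prop :=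
  ∃ p', LoweredTo S i k j l p' p

/-- The monomial group `ℳ`, realised as exponent functions: the free abelian group on the
symbols `Y_{i,k}`, `(i,k) ∈ X`, is identified with finitely supported functions `(ℕ × ℤ) → ℤ`,
written additively. -/
def Y (x : ℕ × ℤ) : (ℕ × ℤ) → ℤ := fun z => if z = x then 1 else 0

noncomputable def ind (s : Prop) : ℤ := @ite ℤ s (Classical.propDecidable s) 1 0

/-- The monomial `m(p)` of a path: `∏ Y_{j,l}` over upper corners times `∏ Y_{j,l}⁻¹`
over lower corners. -/
noncomputable def mon (S : Setting) (p : List (ℝ × ℝ)) : (ℕ × ℤ) → ℤ :=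
  fun x => ind (x ∈ Cp S p true) - ind (x ∈ Cp S p false)

/-- The monomials `A_{j,l}`, with the conventions `Y_{0,·} = Y_{N+1,·} = 1`. -/
def Amon (S : Setting) (j : ℕ) (l : ℤ) : (ℕ × ℤ) → ℤ :=
  match S with
  | .A n =>
      Y (j, l + 1) + Y (j, l - 1) - (if j = 1 then 0 else Y (j - 1, l))
        - (if j = n then 0 else Y (j + 1, l))
  | .B n _ =>
      if j = n then Y (n, l + 1) + Y (n, l - 1) - Y (n - 1, l)
      else if j = n - 1 then
        Y (n - 1, l + 2) + Y (n - 1, l - 2) - (if j = 1 then 0 else Y (n - 2, l))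
          - Y (n, l + 1) - Y (n, l - 1)
      else
        Y (j, l + 2) + Y (j, l - 2) - (if j = 1 then 0 else Y (j - 1, l)) - Y (j + 1, l)

/-- A monomial is dominant iff all its exponents are nonnegative. -/
def Dominant (m : (ℕ × ℤ) → ℤ) : Prop := ∀ x, 0 ≤ m x

/-- A monomial is anti-dominant iff all its exponents are nonpositive. -/
def AntiDominant (m : (ℕ × ℤ) → ℤ) : Prop := ∀ x, m x ≤ 0

/-- `(i',k')` is in snake position with respect to `(i,k)`. -/
def SnakePos : Setting → ℕ × ℤ → ℕ × ℤ → Prop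
  | .A _, ik, ik' => |(ik'.1 : ℤ) - (ik.1 : ℤ)| + 2 ≤ ik'.2 - ik.2
  | .B n _, ik, ik' =>
      if ik.1 = n ∧ ik'.1 = n then
        2 ≤ ik'.2 - ik.2 ∧ (ik'.2 - ik.2) % 4 = 2
      else if ik.1 = n ∨ ik'.1 = n then
        2 * |(ik'.1 : ℤ) - (ik.1 : ℤ)| + 3 ≤ ik'.2 - ik.2 ∧
          (ik'.2 - ik.2) % 4 = (2 * |(ik'.1 : ℤ) - (ik.1 : ℤ)| - 1) % 4
      else
        2 * |(ik'.1 : ℤ) - (ik.1 : ℤ)| + 4 ≤ ik'.2 - ik.2 ∧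
          (ik'.2 - ik.2) % 4 = (2 * |(ik'.1 : ℤ) - (ik.1 : ℤ)|) % 4

/-- A snake: a sequence of points of `X`, each in snake position w.r.t. the previous one. -/
def IsSnake (S : Setting) {T : ℕ} (w : Fin T → ℕ × ℤ) : Prop :=
  (∀ t, w t ∈ X S) ∧
  ∀ (t : Fin T) (h : (t : ℕ) + 1 < T), SnakePos S (w t) (w ⟨(t : ℕ) + 1, h⟩)

/-- `p` is strictly above `p'`. -/
def StrictlyAbove (p p' : List (ℝ × ℝ)) : Prop :=
  ∀ a ∈ p, ∀ b ∈ p', a.1 = b.1 → a.2 < b.2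

/-- A tuple of paths is non-overlapping. -/
def NonOverlapping {T : ℕ} (ps : Fin T → List (ℝ × ℝ)) : Prop :=
  ∀ s t : Fin T, s < t → StrictlyAbove (ps s) (ps t)

/-- The set `𝒫̄` of non-overlapping tuples of paths attached to a snake. -/
def PBar (S : Setting) {T : ℕ} (w : Fin T → ℕ × ℤ) : Set (Fin T → List (ℝ × ℝ)) :=
  {ps | (∀ t, ps t ∈ P S (w t).1 (w t).2) ∧ NonOverlapping ps}

/-- The product `∏_t m(p_t)` of the monomials of a tuple of paths. -/
noncomputable def tmon (S : Setting) {T : ℕ} (ps : Fin T → List (ℝ × ℝ)) : (ℕ × ℤ) → ℤ :=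
  ∑ t, mon S (ps t)

/-- Lowering move at `jl` on a tuple of paths: one component is lowered, the others
are unchanged. -/
def TLoweredTo (S : Setting) {T : ℕ} (w : Fin T → ℕ × ℤ) (jl : ℕ × ℤ)
    (ps ps' : Fin T → List (ℝ × ℝ)) : Prop :=
  ∃ t, LoweredTo S (w t).1 (w t).2 jl.1 jl.2 (ps t) (ps' t) ∧ ∀ s, s ≠ t → ps' s = ps s

/-- Sequences of raising/lowering moves on a single path; the list records, for each move,
whether it was a lowering move (`true`) or a raising move (`false`), and its site. -/
inductive MoveSeq (S : Setting) (i : ℕ) (k : ℤ) :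
    List (ℝ × ℝ) → List (ℝ × ℝ) → List (Bool × (ℕ × ℤ)) → Prop where
  | nil (p : List (ℝ × ℝ)) : MoveSeq S i k p p []
  | lower {p q r : List (ℝ × ℝ)} {jl : ℕ × ℤ} {ms : List (Bool × (ℕ × ℤ))} :
      jl ∈ W S → LoweredTo S i k jl.1 jl.2 p q → MoveSeq S i k q r ms →
      MoveSeq S i k p r ((true, jl) :: ms)
  | raise {p q r : List (ℝ × ℝ)} {jl : ℕ × ℤ} {ms : List (Bool × (ℕ × ℤ))} :
      jl ∈ W S → LoweredTo S i k jl.1 jl.2 q p → MoveSeq S i k q r ms →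
      MoveSeq S i k p r ((false, jl) :: ms)

/-- Sequences of raising/lowering moves on tuples of paths, all of whose intermediate
tuples are non-overlapping. -/
inductive TMoveSeq (S : Setting) {T : ℕ} (w : Fin T → ℕ × ℤ) :
    (Fin T → List (ℝ × ℝ)) → (Fin T → List (ℝ × ℝ)) → List (Bool × (ℕ × ℤ)) → Prop where
  | nil (ps : Fin T → List (ℝ × ℝ)) : TMoveSeq S w ps ps []
  | lower {ps qs rs : Fin T → List (ℝ × ℝ)} {jl : ℕ × ℤ} {ms : List (Bool × (ℕ × ℤ))} :
      jl ∈ W S → TLoweredTo S w jl ps qs → NonOverlapping qs →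
      TMoveSeq S w qs rs ms → TMoveSeq S w ps rs ((true, jl) :: ms)
  | raise {ps qs rs : Fin T → List (ℝ × ℝ)} {jl : ℕ × ℤ} {ms : List (Bool × (ℕ × ℤ))} :
      jl ∈ W S → TLoweredTo S w jl qs ps → NonOverlapping qs →
      TMoveSeq S w qs rs ms → TMoveSeq S w ps rs ((false, jl) :: ms)

/-- Sequences of lowering moves on tuples of paths, all of whose intermediate tuples
are non-overlapping; the list records the sites, in order. -/
inductive TLowerSeq (S : Setting) {T : ℕ} (w : Fin T → ℕ × ℤ) :
    (Fin T → List (ℝ × ℝ)) → (Fin T → List (ℝ × ℝ)) → List (ℕ × ℤ) → Prop where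
  | nil (ps : Fin T → List (ℝ × ℝ)) : TLowerSeq S w ps ps []
  | cons {ps qs rs : Fin T → List (ℝ × ℝ)} {jl : ℕ × ℤ} {ms : List (ℕ × ℤ)} :
      jl ∈ W S → TLoweredTo S w jl ps qs → NonOverlapping qs →
      TLowerSeq S w qs rs ms → TLowerSeq S w ps rs (jl :: ms)

/-- Weak order on paths with the same x-coordinates: `p` is weakly above `p'`. -/
def WeaklyAbove (p p' : List (ℝ × ℝ)) : Prop :=
  p.length = p'.length ∧ ∀ r, r < p.length → (pt p r).2 ≤ (pt p' r).2

/-- `p` is weakly below `p'`. -/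
def WeaklyBelow (p p' : List (ℝ × ℝ)) : Prop :=
  p.length = p'.length ∧ ∀ r, r < p.length → (pt p' r).2 ≤ (pt p r).2

/-- The path `top(p, p')`. -/
def topPath (p p' : List (ℝ × ℝ)) : List (ℝ × ℝ) :=
  List.zipWith (fun a b => (a.1, min a.2 b.2)) p p'

/-- The distinguished point contained in the highest path `p⁺_{i,k}`. -/
def highPoint : Setting → ℕ → ℤ → ℝ × ℝ
  | .A _, i, k => ((i : ℝ), (k : ℝ))
  | .B n ε, i, k =>
      if i = n then (2 * (n : ℝ) - 1, (k : ℝ) - ε)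
      else (((iotaB n (i, k)).1 : ℝ), ((iotaB n (i, k)).2 : ℝ))

/-- The distinguished point contained in the lowest path `p⁻_{i,k}`. -/
def lowPoint : Setting → ℕ → ℤ → ℝ × ℝ
  | .A n, i, k => ((n : ℝ) + 1 - (i : ℝ), (k : ℝ) + (n : ℝ) + 1)
  | .B n ε, i, k =>
      if i = n then (2 * (n : ℝ) - 1, (k : ℝ) + 4 * (n : ℝ) - 2 + ε)
      else (((iotaB n (i, k + 4 * (n : ℤ) - 2)).1 : ℝ),
            ((iotaB n (i, k + 4 * (n : ℤ) - 2)).2 : ℝ))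

/-- The highest path `p⁺_{i,k}` : the path of `𝒫_{i,k}` with no lower corners. -/
noncomputable def highestPath (S : Setting) (i : ℕ) (k : ℤ) : List (ℝ × ℝ) :=
  Classical.epsilon fun p => p ∈ P S i k ∧ Cp S p false = ∅

/-- The lowest path `p⁻_{i,k}` : the path of `𝒫_{i,k}` with no upper corners. -/
noncomputable def lowestPath (S : Setting) (i : ℕ) (k : ℤ) : List (ℝ × ℝ) :=
  Classical.epsilon fun p => p ∈ P S i k ∧ Cp S p true = ∅


section Stmt7Aux

open Classical

lemma pt_mem {p : List (ℝ × ℝ)} {r : ℕ} (h : r < p.length) : pt p r ∈ p := by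
  rw [pt, List.getD_eq_getElem _ _ h]; exact List.getElem_mem _

lemma mem_iff_pt {p : List (ℝ × ℝ)} {a : ℝ × ℝ} :
    a ∈ p ↔ ∃ r, r < p.length ∧ pt p r = a := by
  rw [List.mem_iff_getElem]
  constructor
  · rintro ⟨r, h, rfl⟩; exact ⟨r, h, by rw [pt, List.getD_eq_getElem _ _ h]⟩
  · rintro ⟨r, h, ha⟩; exact ⟨r, h, by rw [← ha, pt, List.getD_eq_getElem _ _ h]⟩

lemma not_no_update {T : ℕ} {ps : Fin T → List (ℝ × ℝ)} (hno : NonOverlapping ps)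
    (t : Fin T) (p' : List (ℝ × ℝ)) :
    ¬ NonOverlapping (Function.update ps t p') ↔
      ((∃ s, t < s ∧ ¬ StrictlyAbove p' (ps s)) ∨
       (∃ s, s < t ∧ ¬ StrictlyAbove (ps s) p')) := by
  constructor
  · intro h
    by_contra hc
    push_neg at hc
    obtain ⟨h1, h2⟩ := hc
    apply h
    intro u v huv
    rcases eq_or_ne u t with hu | hu
    · rw [hu] at huv ⊢
      rcases eq_or_ne v t with hv | hv
      · rw [hv] at huv; exact absurd huv (lt_irrefl _)
      · rw [Function.update_self, Function.update_of_ne hv]; exact h1 v huv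
    · rw [Function.update_of_ne hu]
      rcases eq_or_ne v t with hv | hv
      · rw [hv] at huv ⊢; rw [Function.update_self]; exact h2 u huv
      · rw [Function.update_of_ne hv]; exact hno u v huv
  · rintro (⟨s, hts, hs⟩ | ⟨s, hst, hs⟩) h
    · apply hs
      have h2 := h t s hts
      rwa [Function.update_self, Function.update_of_ne (ne_of_gt hts)] at h2
    · apply hs
      have h2 := h s t hst
      rwa [Function.update_self, Function.update_of_ne (ne_of_lt hst)] at h2

lemma SA_low {pold pnew q : List (ℝ × ℝ)}
    (h : ∀ a ∈ pnew, ∃ a0 ∈ pold, a0.1 = a.1 ∧ a0.2 ≤ a.2)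
    (hSA : StrictlyAbove q pold) : StrictlyAbove q pnew := by
  intro a ha b hb hx
  obtain ⟨b0, hb0, hx0, hy0⟩ := h b hb
  exact lt_of_lt_of_le (hSA a ha b0 hb0 (hx.trans hx0.symm)) hy0

lemma SA_high {pold pnew q : List (ℝ × ℝ)}
    (h : ∀ a ∈ pnew, ∃ a0 ∈ pold, a0.1 = a.1 ∧ a.2 ≤ a0.2)
    (hSA : StrictlyAbove pold q) : StrictlyAbove pnew q := by
  intro a ha b hb hx
  obtain ⟨a0, ha0, hx0, hy0⟩ := h a ha
  exact lt_of_le_of_lt hy0 (hSA a0 ha0 b hb (hx0.trans hx))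

lemma replace1_mem {p p' : List (ℝ × ℝ)} {q q' : ℝ × ℝ} (h : Replace1 p p' q q') :
    q ∈ p ∧ q' ∈ p' ∧ ∀ a ∈ p', a = q' ∨ a ∈ p := by
  obtain ⟨r, hr, hq, hlen, hq', hoth⟩ := h
  refine ⟨by rw [← hq]; exact pt_mem hr,
    by rw [← hq']; exact pt_mem (by rw [hlen]; exact hr), ?_⟩
  intro a ha
  obtain ⟨u, hu, hau⟩ := mem_iff_pt.1 ha
  rcases eq_or_ne u r with rfl | hne
  · left; rw [← hau, hq']
  · right
    rw [← hau, hoth u (by rw [← hlen]; exact hu) hne]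
    exact pt_mem (by rw [← hlen]; exact hu)

lemma replace2_mem {p p' : List (ℝ × ℝ)} {q1 q1' q2 q2' : ℝ × ℝ}
    (h : Replace2 p p' q1 q1' q2 q2') :
    q1 ∈ p ∧ q2 ∈ p ∧ q1' ∈ p' ∧ q2' ∈ p' ∧ ∀ a ∈ p', a = q1' ∨ a = q2' ∨ a ∈ p := by
  obtain ⟨r, s, hr, hs, hrs, hq1, hq2, hlen, hq1', hq2', hoth⟩ := h
  refine ⟨by rw [← hq1]; exact pt_mem hr, by rw [← hq2]; exact pt_mem hs,
    by rw [← hq1']; exact pt_mem (by rw [hlen]; exact hr),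
    by rw [← hq2']; exact pt_mem (by rw [hlen]; exact hs), ?_⟩
  intro a ha
  obtain ⟨u, hu, hau⟩ := mem_iff_pt.1 ha
  rcases eq_or_ne u r with rfl | hne1
  · left; rw [← hau, hq1']
  rcases eq_or_ne u s with rfl | hne2
  · right; left; rw [← hau, hq2']
  · right; right
    rw [← hau, hoth u (by rw [← hlen]; exact hu) hne1 hne2]
    exact pt_mem (by rw [← hlen]; exact hu)

end Stmt7Aux
section Stmt7A

lemma A_heights {n i : ℕ} {k : ℤ} {p : List (ℝ × ℝ)} (hp : p ∈ pathsA n i k) :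
    ∀ r, r ≤ n + 1 → ∃ m : ℤ, (pt p r).2 = (m : ℝ) ∧ m % 2 = ((i : ℤ) + k + r) % 2 := by
  obtain ⟨hlen, hx, h0, hN, hstep⟩ := hp
  intro r hr
  induction r with
  | zero =>
    refine ⟨(i : ℤ) + k, by rw [h0]; push_cast; ring, by simp⟩
  | succ r ih =>
    obtain ⟨m, hm, hmod⟩ := ih (Nat.le_of_succ_le hr)
    rcases hstep r (Nat.lt_succ_iff.mp (Nat.lt_of_succ_le hr)) with h | h
    · refine ⟨m + 1, by push_cast; rw [hm] at h; linarith, by push_cast; omega⟩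
    · refine ⟨m - 1, by push_cast; rw [hm] at h; linarith, by push_cast; omega⟩

lemma A_pt_x {n i : ℕ} {k : ℤ} {p : List (ℝ × ℝ)} (hp : p ∈ pathsA n i k)
    {r : ℕ} (hr : r < n + 2) : (pt p r).1 = (r : ℝ) :=
  hp.2.1 r hr

lemma A_len {n i : ℕ} {k : ℤ} {p : List (ℝ × ℝ)} (hp : p ∈ pathsA n i k) :
    p.length = n + 2 := hp.1

lemma A_pt_col {n i : ℕ} {k : ℤ} {p : List (ℝ × ℝ)} (hp : p ∈ pathsA n i k)
    {a : ℝ × ℝ} (ha : a ∈ p) {j : ℕ} (hx : a.1 = (j : ℝ)) :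
    a = pt p j ∧ j < n + 2 := by
  obtain ⟨r, hr, hra⟩ := mem_iff_pt.1 ha
  rw [A_len hp] at hr
  have hxr : (pt p r).1 = (r : ℝ) := A_pt_x hp hr
  have : (r : ℝ) = (j : ℝ) := by rw [← hxr, hra, hx]
  have hrj : r = j := Nat.cast_injective this
  subst hrj
  exact ⟨hra.symm, hr⟩

end Stmt7A
section Stmt7Amain

lemma replace1_symm {p p' : List (ℝ × ℝ)} {q q' : ℝ × ℝ} (h : Replace1 p p' q q') :
    Replace1 p' p q' q := by
  obtain ⟨r, hr, hq, hlen, hq', hoth⟩ := h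
  exact ⟨r, by rw [hlen]; exact hr, hq', hlen.symm, hq,
    fun s hs hsr => (hoth s (by rw [← hlen]; exact hs) hsr).symm⟩

lemma replace2_symm {p p' : List (ℝ × ℝ)} {q1 q1' q2 q2' : ℝ × ℝ}
    (h : Replace2 p p' q1 q1' q2 q2') : Replace2 p' p q1' q1 q2' q2 := by
  obtain ⟨r, s, hr, hs, hrs, hq1, hq2, hlen, hq1', hq2', hoth⟩ := h
  exact ⟨r, s, by rw [hlen]; exact hr, by rw [hlen]; exact hs, hrs, hq1', hq2',
    hlen.symm, hq1, hq2,
    fun u hu hur hus => (hoth u (by rw [← hlen]; exact hu) hur hus).symm⟩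

lemma A_lower_iff {n : ℕ} {T : ℕ} {w : Fin T → ℕ × ℤ} (hw : IsSnake (.A n) w)
    {ps : Fin T → List (ℝ × ℝ)} (hmem : ∀ u, ps u ∈ P (.A n) (w u).1 (w u).2)
    (hno : NonOverlapping ps) (t : Fin T) {j : ℕ} {l : ℤ}
    (hjl : (j, l) ∈ W (.A n)) (p' : List (ℝ × ℝ))
    (hlow : LoweredTo (.A n) (w t).1 (w t).2 j l (ps t) p') :
    ¬ NonOverlapping (Function.update ps t p') ↔
      ∃ s : Fin T, t < s ∧
        ((j, l + 1) ∈ Cp (.A n) (ps s) true ∨ (j, l - 1) ∈ Cp (.A n) (ps s) false) := by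
  obtain ⟨hptP, hp'P, hcan, hrep⟩ := hlow
  simp only [W, X, Set.mem_setOf_eq, XA, rr] at hjl
  obtain ⟨hj1, hjn, hpar⟩ := hjl
  have hps_t := hmem t
  obtain ⟨hq_mem, hq'_mem, hmemsplit⟩ := replace1_mem hrep
  obtain ⟨hC1, hC2⟩ := hcan
  simp only [Cp, Set.mem_setOf_eq, if_pos, rr] at hC1
  have hnb1 : (pt (ps t) (j - 1)).2 = (l : ℝ) := by
    have h := hC1.2.2.2.1; push_cast at h; linarith
  have hnb2 : (pt (ps t) (j + 1)).2 = (l : ℝ) := by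
    have h := hC1.2.2.2.2; push_cast at h; linarith
  have holdx : pt (ps t) j = ((j : ℝ), (l : ℝ) - 1) := by
    have h := hC1.2.2.1; push_cast at h; exact h
  rw [not_no_update hno t p']
  constructor
  · rintro (⟨s, hts, hs⟩ | ⟨s, hst, hs⟩)
    swap
    · exfalso
      apply hs
      refine SA_low ?_ (hno s t hst)
      intro a ha
      rcases hmemsplit a ha with rfl | hain
      · exact ⟨((j:ℝ), (l:ℝ) - 1), hq_mem, rfl, by change (l:ℝ) - 1 ≤ (l:ℝ) + 1; linarith⟩
      · exact ⟨a, hain, rfl, le_refl _⟩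
    simp only [StrictlyAbove] at hs
    push_neg at hs
    obtain ⟨a, ha, b, hb, hxab, hyab⟩ := hs
    rcases hmemsplit a ha with rfl | hain
    swap
    · exact absurd (hno t s hts a hain b hb hxab) (not_lt.2 hyab)
    have hps_s := hmem s
    obtain ⟨hbj, hjlen⟩ := A_pt_col hps_s hb hxab.symm
    obtain ⟨mb, hmb, hmbmod⟩ := A_heights hps_s j (by omega)
    -- b.2 = mb
    have hbval : b.2 = (mb : ℝ) := by rw [hbj, hmb]
    -- lower bound
    have hlb : ((l:ℝ) - 1) < b.2 :=
      hno t s hts _ hq_mem b hb hxab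
    have hub : b.2 ≤ (l:ℝ) + 1 := hyab
    -- parity of ps t at j
    obtain ⟨mt, hmt, hmtmod⟩ := A_heights hps_t j (by omega)
    have hmtval : mt = l - 1 := by
      have : (mt : ℝ) = (l:ℝ) - 1 := by rw [← hmt, holdx]
      exact_mod_cast this
    have hXt := hw.1 t
    have hXs := hw.1 s
    simp only [X, XA, Set.mem_setOf_eq] at hXt hXs
    have hmbl : mb = l + 1 := by
      have h1 : (l:ℤ) - 1 < mb := by exact_mod_cast hbval ▸ hlb
      have h2 : mb ≤ l + 1 := by exact_mod_cast hbval ▸ hub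
      omega
    -- neighbors of ps s at j-1, j+1
    have hjm : j - 1 + 1 = j := by omega
    have hstep1 := hps_s.2.2.2.2 (j-1) (by omega)
    have hstep2 := hps_s.2.2.2.2 j (by omega)
    rw [hjm] at hstep1
    have hbv : (pt (ps s) j).2 = (l:ℝ) + 1 := by
      rw [← hbj, hbval, hmbl]; push_cast; ring
    have hsa1 : (pt (ps s) (j-1)).2 > (l:ℝ) := by
      have hmemt : pt (ps t) (j-1) ∈ ps t := pt_mem (by rw [A_len hps_t]; omega)
      have hmems : pt (ps s) (j-1) ∈ ps s := pt_mem (by rw [A_len hps_s]; omega)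
      have hx1 : (pt (ps t) (j-1)).1 = (pt (ps s) (j-1)).1 := by
        rw [A_pt_x hps_t (by omega), A_pt_x hps_s (by omega)]
      have := hno t s hts _ hmemt _ hmems hx1
      rw [hnb1] at this; exact this
    have hsa2 : (pt (ps s) (j+1)).2 > (l:ℝ) := by
      have hmemt : pt (ps t) (j+1) ∈ ps t := pt_mem (by rw [A_len hps_t]; omega)
      have hmems : pt (ps s) (j+1) ∈ ps s := pt_mem (by rw [A_len hps_s]; omega)
      have hx1 : (pt (ps t) (j+1)).1 = (pt (ps s) (j+1)).1 := by
        rw [A_pt_x hps_t (by omega), A_pt_x hps_s (by omega)]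
      have := hno t s hts _ hmemt _ hmems hx1
      rw [hnb2] at this; exact this
    have hn1 : (pt (ps s) (j-1)).2 = (l:ℝ) + 2 := by
      rcases hstep1 with h | h <;> rw [hbv] at h <;> linarith
    have hn2 : (pt (ps s) (j+1)).2 = (l:ℝ) + 2 := by
      rcases hstep2 with h | h <;> rw [hbv] at h <;> linarith
    refine ⟨s, hts, Or.inl ?_⟩
    simp only [Cp, Set.mem_setOf_eq, if_pos]
    refine ⟨hj1, hjn, ?_, ?_, ?_⟩
    · have hxx : (pt (ps s) j).1 = (j:ℝ) := A_pt_x hps_s (by omega)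
      have : pt (ps s) j = ((pt (ps s) j).1, (pt (ps s) j).2) := rfl
      rw [this, hxx, hbv]
      norm_num
    · rw [hn1]; push_cast; ring
    · rw [hn2]; push_cast; ring
  · rintro ⟨s, hts, hC | hC⟩ <;>
      simp only [Cp, Set.mem_setOf_eq, if_pos] at hC <;>
      [skip; skip] <;> left <;> refine ⟨s, hts, ?_⟩ <;> intro hSA
    · have hbmem : pt (ps s) j ∈ ps s := pt_mem (by rw [A_len (hmem s)]; omega)
      have hx : ((j:ℝ), (l:ℝ)+1).1 = (pt (ps s) j).1 := by rw [hC.2.2.1]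
      have := hSA _ hq'_mem _ hbmem hx
      rw [hC.2.2.1] at this
      simp only at this
      push_cast at this
      linarith
    · have hbmem : pt (ps s) j ∈ ps s := pt_mem (by rw [A_len (hmem s)]; omega)
      have hx : ((j:ℝ), (l:ℝ)+1).1 = (pt (ps s) j).1 := by rw [hC.2.2.1]
      have := hSA _ hq'_mem _ hbmem hx
      rw [hC.2.2.1] at this
      simp only at this
      push_cast at this
      linarith

end Stmt7Amain
section Stmt7Araise

lemma A_raise_iff {n : ℕ} {T : ℕ} {w : Fin T → ℕ × ℤ} (hw : IsSnake (.A n) w)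
    {ps : Fin T → List (ℝ × ℝ)} (hmem : ∀ u, ps u ∈ P (.A n) (w u).1 (w u).2)
    (hno : NonOverlapping ps) (t : Fin T) {j : ℕ} {l : ℤ}
    (hjl : (j, l) ∈ W (.A n)) (p' : List (ℝ × ℝ))
    (hlow : LoweredTo (.A n) (w t).1 (w t).2 j l p' (ps t)) :
    ¬ NonOverlapping (Function.update ps t p') ↔
      ∃ s : Fin T, s < t ∧
        ((j, l - 1) ∈ Cp (.A n) (ps s) false ∨ (j, l + 1) ∈ Cp (.A n) (ps s) true) := by
  obtain ⟨hp'P, hptP, hcan, hrep⟩ := hlow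
  simp only [W, X, Set.mem_setOf_eq, XA, rr] at hjl
  obtain ⟨hj1, hjn, hpar⟩ := hjl
  have hps_t := hmem t
  have hrep' : Replace1 (ps t) p' ((j:ℝ), (l:ℝ)+1) ((j:ℝ), (l:ℝ)-1) := replace1_symm hrep
  obtain ⟨hq_mem, hq'_mem, hmemsplit⟩ := replace1_mem hrep'
  -- hq_mem : (j, l+1) ∈ ps t ; hq'_mem : (j, l-1) ∈ p'
  obtain ⟨hC1, hC2⟩ := hcan
  simp only [Cp, Set.mem_setOf_eq, if_pos, rr] at hC1
  -- neighbors of p' (and hence of ps t) at j±1 have height l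
  have hnb1' : (pt p' (j - 1)).2 = (l : ℝ) := by
    have h := hC1.2.2.2.1; push_cast at h; linarith
  have hnb2' : (pt p' (j + 1)).2 = (l : ℝ) := by
    have h := hC1.2.2.2.2; push_cast at h; linarith
  have holdx' : pt p' j = ((j : ℝ), (l : ℝ) - 1) := by
    have h := hC1.2.2.1; push_cast at h; exact h
  have hp'A : p' ∈ pathsA n (w t).1 (w t).2 := hp'P
  have hptA : ps t ∈ pathsA n (w t).1 (w t).2 := hptP
  -- the replaced index in hrep is j itself
  have hnbt1 : (pt (ps t) (j - 1)).2 = (l : ℝ) := by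
    obtain ⟨r, hr, hq, hlen, hq', hoth⟩ := hrep
    have hrj : r = j := by
      have hx1 : (pt p' r).1 = (r : ℝ) := A_pt_x hp'A (by rw [← hp'A.1]; exact hr)
      have : (r : ℝ) = (j : ℝ) := by rw [← hx1, hq]
      exact_mod_cast this
    rw [hrj] at hoth
    rw [hoth (j-1) (by rw [hp'A.1]; omega) (by omega)]
    exact hnb1'
  have hnbt2 : (pt (ps t) (j + 1)).2 = (l : ℝ) := by
    obtain ⟨r, hr, hq, hlen, hq', hoth⟩ := hrep
    have hrj : r = j := by
      have hx1 : (pt p' r).1 = (r : ℝ) := A_pt_x hp'A (by rw [← hp'A.1]; exact hr)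
      have : (r : ℝ) = (j : ℝ) := by rw [← hx1, hq]
      exact_mod_cast this
    rw [hrj] at hoth
    rw [hoth (j+1) (by rw [hp'A.1]; omega) (by omega)]
    exact hnb2'
  rw [not_no_update hno t p']
  constructor
  · rintro (⟨s, hts, hs⟩ | ⟨s, hst, hs⟩)
    · exfalso
      apply hs
      refine SA_high ?_ (hno t s hts)
      intro a ha
      rcases hmemsplit a ha with rfl | hain
      · exact ⟨((j:ℝ), (l:ℝ) + 1), hq_mem, rfl, by change (l:ℝ) - 1 ≤ (l:ℝ) + 1; linarith⟩
      · exact ⟨a, hain, rfl, le_refl _⟩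
    simp only [StrictlyAbove] at hs
    push_neg at hs
    obtain ⟨a, ha, b, hb, hxab, hyab⟩ := hs
    -- a ∈ ps s, b ∈ p', b.2 ≤ a.2
    rcases hmemsplit b hb with rfl | hbin
    swap
    · exact absurd (hno s t hst a ha b hbin hxab) (not_lt.2 hyab)
    -- b = (j, l-1), a at column j with a.2 ≥ l-1 and a.2 < l+1
    have hps_s := hmem s
    obtain ⟨haj, hjlen⟩ := A_pt_col hps_s ha hxab
    obtain ⟨ma, hma, hmamod⟩ := A_heights hps_s j (by omega)
    have haval : a.2 = (ma : ℝ) := by rw [haj, hma]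
    have hub : a.2 < (l:ℝ) + 1 := hno s t hst a ha _ hq_mem hxab
    have hlb : (l:ℝ) - 1 ≤ a.2 := hyab
    obtain ⟨mt, hmt, hmtmod⟩ := A_heights hps_t j (by omega)
    have hmtval : mt = l + 1 := by
      have hptj : pt (ps t) j = ((j:ℝ), (l:ℝ)+1) := by
        obtain ⟨r, hr, hq, hlen, hq', hoth⟩ := hrep'
        have hrj : r = j := by
          have hx1 : (pt (ps t) r).1 = (r : ℝ) := A_pt_x hptA (by rw [← hptA.1]; exact hr)
          have : (r : ℝ) = (j : ℝ) := by rw [← hx1, hq]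
          exact_mod_cast this
        rw [hrj] at hq; exact hq
      have : (mt : ℝ) = (l:ℝ) + 1 := by rw [← hmt, hptj]
      exact_mod_cast this
    have hXt := hw.1 t
    have hXs := hw.1 s
    simp only [X, XA, Set.mem_setOf_eq] at hXt hXs
    have hmal : ma = l - 1 := by
      have h1 : (l:ℤ) - 1 ≤ ma := by exact_mod_cast haval ▸ hlb
      have h2 : ma < l + 1 := by exact_mod_cast haval ▸ hub
      omega
    have hjm : j - 1 + 1 = j := by omega
    have hstep1 := hps_s.2.2.2.2 (j-1) (by omega)
    have hstep2 := hps_s.2.2.2.2 j (by omega)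
    rw [hjm] at hstep1
    have hav : (pt (ps s) j).2 = (l:ℝ) - 1 := by
      rw [← haj, haval, hmal]; push_cast; ring
    have hsa1 : (pt (ps s) (j-1)).2 < (l:ℝ) := by
      have hmemt : pt (ps t) (j-1) ∈ ps t := pt_mem (by rw [A_len hptA]; omega)
      have hmems : pt (ps s) (j-1) ∈ ps s := pt_mem (by rw [A_len hps_s]; omega)
      have hx1 : (pt (ps s) (j-1)).1 = (pt (ps t) (j-1)).1 := by
        rw [A_pt_x hptA (by omega), A_pt_x hps_s (by omega)]
      have := hno s t hst _ hmems _ hmemt hx1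
      rw [hnbt1] at this; exact this
    have hsa2 : (pt (ps s) (j+1)).2 < (l:ℝ) := by
      have hmemt : pt (ps t) (j+1) ∈ ps t := pt_mem (by rw [A_len hptA]; omega)
      have hmems : pt (ps s) (j+1) ∈ ps s := pt_mem (by rw [A_len hps_s]; omega)
      have hx1 : (pt (ps s) (j+1)).1 = (pt (ps t) (j+1)).1 := by
        rw [A_pt_x hptA (by omega), A_pt_x hps_s (by omega)]
      have := hno s t hst _ hmems _ hmemt hx1
      rw [hnbt2] at this; exact this
    have hn1 : (pt (ps s) (j-1)).2 = (l:ℝ) - 2 := by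
      rcases hstep1 with h | h <;> rw [hav] at h <;> linarith
    have hn2 : (pt (ps s) (j+1)).2 = (l:ℝ) - 2 := by
      rcases hstep2 with h | h <;> rw [hav] at h <;> linarith
    refine ⟨s, hst, Or.inl ?_⟩
    simp only [Cp, Set.mem_setOf_eq]
    refine ⟨hj1, hjn, ?_, ?_, ?_⟩
    · have hxx : (pt (ps s) j).1 = (j:ℝ) := A_pt_x hps_s (by omega)
      have h0 : pt (ps s) j = ((pt (ps s) j).1, (pt (ps s) j).2) := rfl
      rw [h0, hxx, hav]
      norm_num
    · rw [hn1]; push_cast; ring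
    · rw [hn2]; push_cast; ring
  · rintro ⟨s, hst, hC | hC⟩ <;>
      simp only [Cp, Set.mem_setOf_eq] at hC <;> right <;> refine ⟨s, hst, ?_⟩ <;> intro hSA
    · have hbmem : pt (ps s) j ∈ ps s := pt_mem (by rw [A_len (hmem s)]; omega)
      have hx : (pt (ps s) j).1 = ((j:ℝ), (l:ℝ)-1).1 := by rw [hC.2.2.1]
      have := hSA _ hbmem _ hq'_mem hx
      rw [hC.2.2.1] at this
      simp only at this
      push_cast at this
      linarith
    · have hbmem : pt (ps s) j ∈ ps s := pt_mem (by rw [A_len (hmem s)]; omega)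
      have hx : (pt (ps s) j).1 = ((j:ℝ), (l:ℝ)-1).1 := by rw [hC.2.2.1]
      have := hSA _ hbmem _ hq'_mem hx
      rw [hC.2.2.1] at this
      simp only at this
      push_cast at this
      linarith

end Stmt7Araise
section Stmt7Bspin

lemma int_window {x : ℤ} (h1 : (0:ℝ) < x) (h2 : (x:ℝ) < 1) : False := by
  have g1 : 0 < x := by exact_mod_cast h1
  have g2 : x < 1 := by exact_mod_cast h2
  omega

lemma uniq_eps {ε : ℝ} (hε : 0 < ε) (hε2 : ε < 1/2) {M M' s s' : ℤ}
    (hs : s = 1 ∨ s = -1) (hs' : s' = 1 ∨ s' = -1)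
    (h : (M:ℝ) + s*ε = M' + s'*ε) : M = M' ∧ s = s' := by
  rcases hs with rfl | rfl <;> rcases hs' with rfl | rfl <;> push_cast at h
  · exact ⟨by exact_mod_cast (by linarith : (M:ℝ) = M'), rfl⟩
  · exfalso
    rcases lt_trichotomy M M' with hlt | heq | hgt
    · refine int_window (x := M' - M) ?_ ?_ <;> push_cast <;>
        [linarith [(by exact_mod_cast hlt : (M:ℝ) < M')]; linarith]
    · rw [heq] at h; linarith
    · have : (M':ℝ) < M := by exact_mod_cast hgt
      linarith
  · exfalso
    rcases lt_trichotomy M M' with hlt | heq | hgt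
    · have : (M:ℝ) < M' := by exact_mod_cast hlt
      linarith
    · rw [heq] at h; linarith
    · refine int_window (x := M - M') ?_ ?_ <;> push_cast <;>
        [linarith [(by exact_mod_cast hgt : (M':ℝ) < M)]; linarith]
  · exact ⟨by exact_mod_cast (by linarith : (M:ℝ) = M'), rfl⟩

lemma no_mid {l M s : ℤ} {ε : ℝ} (hε : 0 < ε) (hε2 : ε < 1/2) (hM : M % 2 = 1)
    (hl : l % 2 = 0) (hs : s = 1 ∨ s = -1)
    (h1 : (l:ℝ) - 1 + ε < M + s*ε) (h2 : (M:ℝ) + s*ε < l + 1 - ε) : False := by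
  have hse : (s:ℝ)*ε ≤ ε ∧ -ε ≤ (s:ℝ)*ε := by
    rcases hs with rfl | rfl <;> constructor <;> push_cast <;> linarith
  have hMl : l - 1 < M := by
    by_contra hcon
    push_neg at hcon
    have : (M:ℝ) ≤ (l:ℝ) - 1 := by exact_mod_cast (by omega : M ≤ l - 1)
    linarith [hse.1]
  have hMu : M < l + 1 := by
    by_contra hcon
    push_neg at hcon
    have : (l:ℝ) + 1 ≤ (M:ℝ) := by exact_mod_cast hcon
    linarith [hse.2]
  omega

lemma Bspin_len {n : ℕ} {ε : ℝ} {L : ℤ} {q : List (ℝ × ℝ)}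
    (hq : q ∈ pathsBspin n ε L) : q.length = n + 1 := hq.1

lemma Bspin_heights {n : ℕ} {ε : ℝ} {L : ℤ} {q : List (ℝ × ℝ)}
    (hq : q ∈ pathsBspin n ε L) :
    ∀ r, r < n → ∃ m : ℤ, (pt q r).2 = (m:ℝ) ∧ m % 4 = (L + 2*n - 1 + 2*r) % 4 := by
  obtain ⟨hlen, hxs, hxn, h0, hstep, hlast⟩ := hq
  intro r hr
  induction r with
  | zero =>
    refine ⟨L + 2*n - 1, by rw [h0]; push_cast; ring, by omega⟩
  | succ r ih =>
    obtain ⟨m, hm, hmod⟩ := ih (by omega)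
    rcases hstep r (by omega) with h | h
    · exact ⟨m + 2, by push_cast; rw [hm] at h; linarith, by push_cast; omega⟩
    · exact ⟨m - 2, by push_cast; rw [hm] at h; linarith, by push_cast; omega⟩

lemma Bspin_x {n : ℕ} {ε : ℝ} {L : ℤ} {q : List (ℝ × ℝ)}
    (hq : q ∈ pathsBspin n ε L) (hL : L % 2 = 1) :
    (∀ r, r < n → (pt q r).1 = (if L % 4 = 3 then (2*r : ℝ) else 4*(n:ℝ) - 2 - 2*r)) ∧
      (pt q n).1 = 2*(n:ℝ) - 1 := by
  obtain ⟨hlen, hxs, hxn, h0, hstep, hlast⟩ := hq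
  constructor
  · intro r hr
    by_cases h3 : L % 4 = 3
    · rw [if_pos h3] at hxs ⊢; exact hxs r hr
    · rw [if_neg h3] at hxs ⊢; exact hxs r hr
  · exact hxn

lemma Bspin_last {n : ℕ} {ε : ℝ} {L : ℤ} {q : List (ℝ × ℝ)} (hn : 2 ≤ n)
    (hq : q ∈ pathsBspin n ε L) (hL : L % 2 = 1) :
    ∃ M s : ℤ, (s = 1 ∨ s = -1) ∧ (pt q n).2 = (M:ℝ) + s*ε ∧
      (M + s) % 4 = (L + 3) % 4 ∧ M % 2 = 1 ∧ (pt q (n-1)).2 = ((M - s : ℤ):ℝ) := by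
  obtain ⟨m, hm, hmod⟩ := Bspin_heights hq (n-1) (by omega)
  have hn1 : n - 1 + 2 = n + 1 := by omega
  rcases hq.2.2.2.2.2 with h | h
  · refine ⟨m + 1, 1, Or.inl rfl, ?_, ?_, ?_, ?_⟩
    · rw [hm] at h; push_cast; linarith
    · have : (L + 2*(n:ℤ) - 1 + 2*(n-1:ℕ)) % 4 = (L + 4*(n:ℤ) - 3) % 4 := by
        have : ((n-1:ℕ):ℤ) = (n:ℤ) - 1 := by push_cast [Nat.cast_sub (by omega : 1 ≤ n)]; ring
        rw [this]; ring_nf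
      omega
    · omega
    · rw [hm]; push_cast; ring
  · refine ⟨m - 1, -1, Or.inr rfl, ?_, ?_, ?_, ?_⟩
    · rw [hm] at h; push_cast; linarith
    · have : ((n-1:ℕ):ℤ) = (n:ℤ) - 1 := by push_cast [Nat.cast_sub (by omega : 1 ≤ n)]; ring
      rw [this] at hmod
      omega
    · omega
    · rw [hm]; push_cast; ring

lemma Bspin_mem {n : ℕ} {ε : ℝ} {L : ℤ} {q : List (ℝ × ℝ)}
    (hq : q ∈ pathsBspin n ε L) {v : ℝ × ℝ} (hv : v ∈ q) :
    ∃ r, r ≤ n ∧ pt q r = v := by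
  obtain ⟨r, hr, hrv⟩ := mem_iff_pt.1 hv
  exact ⟨r, by rw [Bspin_len hq] at hr; omega, hrv⟩

-- a point of a spin path at the column 2n-1 must be the last point
lemma Bspin_spincol {n : ℕ} {ε : ℝ} {L : ℤ} {q : List (ℝ × ℝ)} (hn : 2 ≤ n)
    (hq : q ∈ pathsBspin n ε L) (hL : L % 2 = 1) {v : ℝ × ℝ} (hv : v ∈ q)
    (hx : v.1 = 2*(n:ℝ) - 1) : v = pt q n := by
  obtain ⟨r, hr, hrv⟩ := Bspin_mem hq hv
  rcases Nat.lt_or_ge r n with hlt | hge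
  · exfalso
    have hxr := (Bspin_x hq hL).1 r hlt
    rw [hrv, hx] at hxr
    by_cases h3 : L % 4 = 3
    · rw [if_pos h3] at hxr
      have : 2*(n:ℤ) - 1 = 2*r := by exact_mod_cast hxr
      omega
    · rw [if_neg h3] at hxr
      have : 2*(n:ℤ) - 1 = 4*(n:ℤ) - 2 - 2*r := by exact_mod_cast hxr
      omega
  · have : r = n := by omega
    rw [← hrv, this]

-- a point of a spin path at an even column x: index and height class
lemma Bspin_evencol {n : ℕ} {ε : ℝ} {L : ℤ} {q : List (ℝ × ℝ)} (hn : 2 ≤ n)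
    (hq : q ∈ pathsBspin n ε L) (hL : L % 2 = 1) {v : ℝ × ℝ} (hv : v ∈ q)
    {x : ℤ} (hx : v.1 = (x:ℝ)) (hxe : x % 2 = 0) :
    ∃ r : ℕ, r < n ∧ pt q r = v ∧
      (if L % 4 = 3 then x = 2*r ∧ 0 ≤ x ∧ x ≤ 2*n - 2
                    else x = 4*n - 2 - 2*r ∧ 2*n ≤ x ∧ x ≤ 4*n - 2) ∧
      ∃ m : ℤ, v.2 = (m:ℝ) ∧ m % 4 = (2*n + 2 + x) % 4 := by
  obtain ⟨r, hr, hrv⟩ := Bspin_mem hq hv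
  rcases Nat.lt_or_ge r n with hlt | hge
  · obtain ⟨m, hm, hmod⟩ := Bspin_heights hq r hlt
    have hxr := (Bspin_x hq hL).1 r hlt
    refine ⟨r, hlt, hrv, ?_, m, by rw [← hrv]; exact hm, ?_⟩
    · by_cases h3 : L % 4 = 3
      · rw [if_pos h3]
        rw [if_pos h3] at hxr
        rw [hrv, hx] at hxr
        have hx2 : x = 2*(r:ℤ) := by exact_mod_cast hxr
        refine ⟨hx2, by omega, by omega⟩
      · rw [if_neg h3]
        rw [if_neg h3] at hxr
        rw [hrv, hx] at hxr
        have hx2 : x = 4*(n:ℤ) - 2 - 2*r := by exact_mod_cast hxr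
        refine ⟨hx2, by omega, by omega⟩
    · by_cases h3 : L % 4 = 3
      · rw [if_pos h3] at hxr
        rw [hrv, hx] at hxr
        have hx2 : x = 2*(r:ℤ) := by exact_mod_cast hxr
        omega
      · rw [if_neg h3] at hxr
        rw [hrv, hx] at hxr
        have hx2 : x = 4*(n:ℤ) - 2 - 2*r := by exact_mod_cast hxr
        have hL1 : L % 4 = 1 := by omega
        omega
  · exfalso
    have : r = n := by omega
    rw [this] at hrv
    have := (Bspin_x hq hL).2
    rw [hrv, hx] at this
    have h2 : x = 2*(n:ℤ) - 1 := by exact_mod_cast this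
    omega

end Stmt7Bspin
section Stmt7Bpath

lemma pt_concat_a {a c : List (ℝ × ℝ)} {r : ℕ} (h : r < a.length) :
    pt (a ++ c) r = pt a r := by
  unfold pt
  rw [List.getD_eq_getElem _ _ (by rw [List.length_append]; omega),
      List.getD_eq_getElem _ _ h]
  exact List.getElem_append_left h

lemma pt_concat_b {n : ℕ} {a b : List (ℝ × ℝ)} (ha : a.length = n + 1)
    (hb : b.length = n + 1) {u : ℕ} (hu : u ≤ n) :
    pt (a ++ b.reverse) (2*n + 1 - u) = pt b u := by
  unfold pt
  have hlen : (a ++ b.reverse).length = 2*n + 2 := by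
    rw [List.length_append, List.length_reverse, ha, hb]; omega
  rw [List.getD_eq_getElem _ _ (by omega), List.getD_eq_getElem _ _ (by omega)]
  rw [List.getElem_append_right (by omega)]
  have h2 : (2*n + 1 - u) - a.length = n - u := by omega
  simp only [h2]
  rw [List.getElem_reverse (by rw [List.length_reverse]; omega)]
  congr 1
  omega

lemma B_decomp {n : ℕ} {ε : ℝ} {i : ℕ} {k : ℤ} {p : List (ℝ × ℝ)}
    (hp : p ∈ P (.B n ε) i k) :
    (i = n ∧ p ∈ pathsBspin n ε k) ∨
    (i ≠ n ∧ ∃ a b, a ∈ pathsBspin n ε (k - (2*(n:ℤ) - 2*(i:ℤ) - 1)) ∧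
       b ∈ pathsBspin n ε (k + (2*(n:ℤ) - 2*(i:ℤ) - 1)) ∧ p = a ++ b.reverse ∧
       (pt a n).1 = (pt b n).1 ∧ 0 < (pt a n).2 - (pt b n).2) := by
  by_cases h : i = n
  · left
    refine ⟨h, ?_⟩
    have : p ∈ pathsB n ε i k := hp
    rw [pathsB, if_pos h] at this
    exact this
  · right
    refine ⟨h, ?_⟩
    have : p ∈ pathsB n ε i k := hp
    rw [pathsB, if_neg h] at this
    obtain ⟨a, b, h1, h2, h3, h4, h5⟩ := this
    exact ⟨a, b, h1, h2, h3, h4, h5⟩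

lemma XB_parity {n i : ℕ} {k : ℤ} (hik : (i, k) ∈ XB n) :
    (i = n ∧ k % 2 = 1) ∨ (1 ≤ i ∧ i < n ∧ k % 2 = 0) := hik

-- every path has a point on the spin column
lemma B_exists_spinval {n : ℕ} {ε : ℝ} {i : ℕ} {k : ℤ} {p : List (ℝ × ℝ)}
    (hn : 2 ≤ n) (hp : p ∈ P (.B n ε) i k) (hik : (i, k) ∈ XB n) :
    ∃ v ∈ p, v.1 = 2*(n:ℝ) - 1 := by
  rcases B_decomp hp with ⟨hi, hq⟩ | ⟨hi, a, b, ha, hb, rfl, hx, hy⟩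
  · have hL : k % 2 = 1 := by
      rcases XB_parity hik with ⟨_, h⟩ | ⟨_, h2, _⟩
      · exact h
      · omega
    exact ⟨pt p n, pt_mem (by rw [Bspin_len hq]; omega), (Bspin_x hq hL).2⟩
  · have hk : k % 2 = 0 := by
      rcases XB_parity hik with ⟨h, _⟩ | ⟨_, _, h⟩
      · exact absurd h hi
      · exact h
    have hL : (k - (2*(n:ℤ) - 2*(i:ℤ) - 1)) % 2 = 1 := by omega
    refine ⟨pt a n, ?_, (Bspin_x ha hL).2⟩
    exact List.mem_append_left _ (pt_mem (by rw [Bspin_len ha]; omega))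

-- points on the spin column : structure and inner neighbour
lemma B_spinpt {n : ℕ} {ε : ℝ} {i : ℕ} {k : ℤ} {p : List (ℝ × ℝ)}
    (hn : 2 ≤ n) (hp : p ∈ P (.B n ε) i k) (hik : (i, k) ∈ XB n)
    {v : ℝ × ℝ} (hv : v ∈ p) (hx : v.1 = 2*(n:ℝ) - 1) :
    ∃ M s c : ℤ, (s = 1 ∨ s = -1) ∧ v.2 = (M:ℝ) + s*ε ∧ M % 2 = 1 ∧
      ((M + s) % 4 = 2 ∧ c = 2*(n:ℤ) - 2 ∨ (M + s) % 4 = 0 ∧ c = 2*(n:ℤ)) ∧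
      ((c:ℝ), ((M - s : ℤ):ℝ)) ∈ p := by
  have key : ∀ L : ℤ, L % 2 = 1 → ∀ q ∈ pathsBspin n ε L, v ∈ q →
      ∃ M s c : ℤ, (s = 1 ∨ s = -1) ∧ v.2 = (M:ℝ) + s*ε ∧ M % 2 = 1 ∧
        ((M + s) % 4 = 2 ∧ c = 2*(n:ℤ) - 2 ∨ (M + s) % 4 = 0 ∧ c = 2*(n:ℤ)) ∧
        pt q (n-1) = ((c : ℝ), ((M - s : ℤ):ℝ)) := by
    intro L hL q hq hvq
    obtain ⟨M, s, hs, hval, hmod4, hModd, hprev⟩ := Bspin_last hn hq hL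
    have hvn : v = pt q n := Bspin_spincol hn hq hL hvq hx
    have hxprev := (Bspin_x hq hL).1 (n-1) (by omega)
    have heq : pt q (n-1) = ((pt q (n-1)).1, (pt q (n-1)).2) := rfl
    have hn1 : ((n-1 : ℕ):ℝ) = (n:ℝ) - 1 := by
      push_cast [Nat.cast_sub (by omega : 1 ≤ n)]; ring
    by_cases h3 : L % 4 = 3
    · refine ⟨M, s, 2*(n:ℤ) - 2, hs, by rw [hvn]; exact hval, hModd,
        Or.inl ⟨by omega, rfl⟩, ?_⟩
      rw [heq, hxprev, hprev, Prod.ext_iff]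
      refine ⟨?_, rfl⟩
      rw [if_pos h3, hn1]; push_cast; ring
    · have hL1 : L % 4 = 1 := by omega
      refine ⟨M, s, 2*(n:ℤ), hs, by rw [hvn]; exact hval, hModd,
        Or.inr ⟨by omega, rfl⟩, ?_⟩
      rw [heq, hxprev, hprev, Prod.ext_iff]
      refine ⟨?_, rfl⟩
      rw [if_neg h3, hn1]; push_cast; ring
  rcases B_decomp hp with ⟨hi, hq⟩ | ⟨hi, a, b, ha, hb, rfl, hxab, hyab⟩
  · have hL : k % 2 = 1 := by
      rcases XB_parity hik with ⟨_, h⟩ | ⟨_, h2, _⟩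
      · exact h
      · omega
    obtain ⟨M, s, c, hs, hval, hModd, hc, hprev⟩ := key k hL p hq hv
    exact ⟨M, s, c, hs, hval, hModd, hc,
      by rw [← hprev]; exact pt_mem (by rw [Bspin_len hq]; omega)⟩
  · have hk : k % 2 = 0 := by
      rcases XB_parity hik with ⟨h, _⟩ | ⟨_, _, h⟩
      · exact absurd h hi
      · exact h
    rcases List.mem_append.1 hv with hva | hvb
    · have hL : (k - (2*(n:ℤ) - 2*(i:ℤ) - 1)) % 2 = 1 := by omega
      obtain ⟨M, s, c, hs, hval, hModd, hc, hprev⟩ := key _ hL a ha hva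
      refine ⟨M, s, c, hs, hval, hModd, hc, ?_⟩
      rw [← hprev]
      exact List.mem_append_left _ (pt_mem (by rw [Bspin_len ha]; omega))
    · rw [List.mem_reverse] at hvb
      have hL : (k + (2*(n:ℤ) - 2*(i:ℤ) - 1)) % 2 = 1 := by omega
      obtain ⟨M, s, c, hs, hval, hModd, hc, hprev⟩ := key _ hL b hb hvb
      refine ⟨M, s, c, hs, hval, hModd, hc, ?_⟩
      rw [← hprev]
      refine List.mem_append_right _ ?_
      rw [List.mem_reverse]
      exact pt_mem (by rw [Bspin_len hb]; omega)

-- points on even columns : height class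
lemma B_evenpt {n : ℕ} {ε : ℝ} {i : ℕ} {k : ℤ} {p : List (ℝ × ℝ)}
    (hn : 2 ≤ n) (hp : p ∈ P (.B n ε) i k) (hik : (i, k) ∈ XB n)
    {v : ℝ × ℝ} (hv : v ∈ p) {x : ℤ} (hx : v.1 = (x:ℝ)) (hxe : x % 2 = 0) :
    ∃ m : ℤ, v.2 = (m:ℝ) ∧ m % 4 = (2*(n:ℤ) + 2 + x) % 4 := by
  rcases B_decomp hp with ⟨hi, hq⟩ | ⟨hi, a, b, ha, hb, rfl, hxab, hyab⟩
  · have hL : k % 2 = 1 := by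
      rcases XB_parity hik with ⟨_, h⟩ | ⟨_, h2, _⟩
      · exact h
      · omega
    obtain ⟨r, _, _, _, h⟩ := Bspin_evencol hn hq hL hv hx hxe
    exact h
  · have hk : k % 2 = 0 := by
      rcases XB_parity hik with ⟨h, _⟩ | ⟨_, _, h⟩
      · exact absurd h hi
      · exact h
    rcases List.mem_append.1 hv with hva | hvb
    · have hL : (k - (2*(n:ℤ) - 2*(i:ℤ) - 1)) % 2 = 1 := by omega
      obtain ⟨r, _, _, _, h⟩ := Bspin_evencol hn ha hL hva hx hxe
      exact h
    · rw [List.mem_reverse] at hvb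
      have hL : (k + (2*(n:ℤ) - 2*(i:ℤ) - 1)) % 2 = 1 := by omega
      obtain ⟨r, _, _, _, h⟩ := Bspin_evencol hn hb hL hvb hx hxe
      exact h

end Stmt7Bpath
section Stmt7Bnbrs

lemma Bspin_nbrs {n : ℕ} {ε : ℝ} {L : ℤ} {q : List (ℝ × ℝ)} (hn : 2 ≤ n)
    (hq : q ∈ pathsBspin n ε L) (hL : L % 2 = 1) {v : ℝ × ℝ} (hvq : v ∈ q)
    {x : ℤ} (hx : v.1 = (x:ℝ)) (hxe : x % 2 = 0) (hx2 : 2 ≤ x) (hx4 : x ≤ 4*(n:ℤ) - 4) :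
    ∃ rq : ℕ, 1 ≤ rq ∧ rq ≤ n - 1 ∧ pt q rq = v ∧
      ((pt q (rq - 1)).2 = v.2 + 2 ∨ (pt q (rq - 1)).2 = v.2 - 2) ∧
      (if L % 4 = 3 then (pt q (rq-1)).1 = ((x - 2 : ℤ):ℝ)
        else (pt q (rq-1)).1 = ((x + 2:ℤ):ℝ)) ∧
      (if rq ≤ n - 2 then
         (((pt q (rq+1)).2 = v.2 + 2 ∨ (pt q (rq+1)).2 = v.2 - 2) ∧
           (if L % 4 = 3 then (pt q (rq+1)).1 = ((x+2:ℤ):ℝ)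
             else (pt q (rq+1)).1 = ((x-2:ℤ):ℝ)))
       else ((pt q (rq+1)).1 = 2*(n:ℝ)-1 ∧
         ((pt q (rq+1)).2 = v.2 + (1+ε) ∨ (pt q (rq+1)).2 = v.2 - (1+ε)))) ∧
      (L % 4 = 3 → x = 2*rq ∧ x ≤ 2*(n:ℤ) - 2) ∧
      (L % 4 ≠ 3 → x = 4*(n:ℤ) - 2 - 2*rq ∧ 2*(n:ℤ) ≤ x) := by
  obtain ⟨rq, hrn, hrv, hxif, m, hm, hmod⟩ := Bspin_evencol hn hq hL hvq hx hxe
  have hstep := hq.2.2.2.2.1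
  have hlast := hq.2.2.2.2.2
  have hxfun := (Bspin_x hq hL).1
  have hxn := (Bspin_x hq hL).2
  -- basic index facts
  have hrq1 : 1 ≤ rq := by
    by_cases h3 : L % 4 = 3
    · rw [if_pos h3] at hxif; omega
    · rw [if_neg h3] at hxif; omega
  have hrqn : rq ≤ n - 1 := by omega
  refine ⟨rq, hrq1, hrqn, hrv, ?_, ?_, ?_, ?_, ?_⟩
  · -- down neighbour height
    have h := hstep (rq - 1) (by omega)
    rw [(by omega : rq - 1 + 1 = rq), hrv] at h
    rcases h with h | h
    · right; linarith
    · left; linarith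
  · -- down neighbour column
    have hcol := hxfun (rq - 1) (by omega)
    have hc1 : ((rq - 1 : ℕ):ℝ) = (rq:ℝ) - 1 := by
      push_cast [Nat.cast_sub (by omega : 1 ≤ rq)]; ring
    by_cases h3 : L % 4 = 3
    · rw [if_pos h3] at hxif hcol ⊢
      rw [hcol, hc1]
      have : (x:ℝ) = 2*(rq:ℝ) := by exact_mod_cast hxif.1
      push_cast
      linarith
    · rw [if_neg h3] at hxif hcol ⊢
      rw [hcol, hc1]
      have : (x:ℝ) = 4*(n:ℝ) - 2 - 2*(rq:ℝ) := by exact_mod_cast hxif.1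
      push_cast
      linarith
  · -- up neighbour
    by_cases hup : rq ≤ n - 2
    · rw [if_pos hup]
      constructor
      · have h := hstep rq (by omega)
        rw [hrv] at h
        rcases h with h | h
        · left; linarith
        · right; linarith
      · have hcol := hxfun (rq + 1) (by omega)
        by_cases h3 : L % 4 = 3
        · rw [if_pos h3] at hxif hcol ⊢
          rw [hcol]
          have : (x:ℝ) = 2*(rq:ℝ) := by exact_mod_cast hxif.1
          push_cast
          linarith
        · rw [if_neg h3] at hxif hcol ⊢
          rw [hcol]
          have : (x:ℝ) = 4*(n:ℝ) - 2 - 2*(rq:ℝ) := by exact_mod_cast hxif.1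
          push_cast
          linarith
    · rw [if_neg hup]
      have hrqn1 : rq = n - 1 := by omega
      have hrqq : rq + 1 = n := by omega
      rw [hrqq]
      refine ⟨hxn, ?_⟩
      have hnn : n - 1 = rq := by omega
      rw [hnn] at hlast
      rw [hrv] at hlast
      rcases hlast with h | h
      · left; linarith
      · right; linarith
  · intro h3
    rw [if_pos h3] at hxif
    exact ⟨hxif.1, by omega⟩
  · intro h3
    rw [if_neg h3] at hxif
    exact ⟨hxif.1, by omega⟩

lemma B_len_comp {n : ℕ} {a b : List (ℝ × ℝ)} (ha : a.length = n + 1)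
    (hb : b.length = n + 1) : (a ++ b.reverse).length = 2*n + 2 := by
  rw [List.length_append, List.length_reverse, ha, hb]; omega

lemma B_nbrs_far {n : ℕ} {ε : ℝ} {i : ℕ} {k : ℤ} {p : List (ℝ × ℝ)}
    (hn : 2 ≤ n) (hp : p ∈ P (.B n ε) i k) (hik : (i, k) ∈ XB n)
    {v : ℝ × ℝ} (hv : v ∈ p) {x : ℤ} (hx : v.1 = (x:ℝ)) (hxe : x % 2 = 0)
    (hx2 : 2 ≤ x) (hx4 : x ≤ 4*(n:ℤ) - 4) (hxm1 : x ≠ 2*(n:ℤ) - 2) (hxm2 : x ≠ 2*(n:ℤ)) :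
    ∃ r, 1 ≤ r ∧ r + 1 < p.length ∧ pt p r = v ∧
      (((pt p (r-1)).1 = ((x-2:ℤ):ℝ) ∧ (pt p (r+1)).1 = ((x+2:ℤ):ℝ)) ∨
       ((pt p (r-1)).1 = ((x+2:ℤ):ℝ) ∧ (pt p (r+1)).1 = ((x-2:ℤ):ℝ))) ∧
      ((pt p (r-1)).2 = v.2 + 2 ∨ (pt p (r-1)).2 = v.2 - 2) ∧
      ((pt p (r+1)).2 = v.2 + 2 ∨ (pt p (r+1)).2 = v.2 - 2) := by
  rcases B_decomp hp with ⟨hi, hq⟩ | ⟨hi, a, b, ha, hb, rfl, hxab, hyab⟩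
  · have hL : k % 2 = 1 := by
      rcases XB_parity hik with ⟨_, h⟩ | ⟨_, h2, _⟩
      · exact h
      · omega
    obtain ⟨rq, h1, h2, h3, h4, h5, h6, h7, h8⟩ := Bspin_nbrs hn hq hL hv hx hxe hx2 hx4
    have hup : rq ≤ n - 2 := by
      by_cases hd : k % 4 = 3
      · obtain ⟨he, _⟩ := h7 hd; omega
      · obtain ⟨he, _⟩ := h8 hd; omega
    rw [if_pos hup] at h6
    refine ⟨rq, h1, by rw [Bspin_len hq]; omega, h3, ?_, h4, h6.1⟩
    by_cases hd : k % 4 = 3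
    · rw [if_pos hd] at h5; rw [if_pos hd] at h6; exact Or.inl ⟨h5, h6.2⟩
    · rw [if_neg hd] at h5; rw [if_neg hd] at h6; exact Or.inr ⟨h5, h6.2⟩
  · have hk : k % 2 = 0 := by
      rcases XB_parity hik with ⟨h, _⟩ | ⟨_, _, h⟩
      · exact absurd h hi
      · exact h
    have hla := Bspin_len ha
    have hlb := Bspin_len hb
    have hlen := B_len_comp hla hlb
    rcases List.mem_append.1 hv with hva | hvb
    · have hL : (k - (2*(n:ℤ) - 2*(i:ℤ) - 1)) % 2 = 1 := by omega
      obtain ⟨rq, h1, h2, h3, h4, h5, h6, h7, h8⟩ := Bspin_nbrs hn ha hL hva hx hxe hx2 hx4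
      have hup : rq ≤ n - 2 := by
        by_cases hd : (k - (2*(n:ℤ) - 2*(i:ℤ) - 1)) % 4 = 3
        · obtain ⟨he, _⟩ := h7 hd; omega
        · obtain ⟨he, _⟩ := h8 hd; omega
      rw [if_pos hup] at h6
      have e0 : pt (a ++ b.reverse) rq = pt a rq := pt_concat_a (by omega)
      have e1 : pt (a ++ b.reverse) (rq - 1) = pt a (rq - 1) := pt_concat_a (by omega)
      have e2 : pt (a ++ b.reverse) (rq + 1) = pt a (rq + 1) := pt_concat_a (by omega)
      refine ⟨rq, h1, by omega, by rw [e0]; exact h3, ?_, by rw [e1]; exact h4,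
        by rw [e2]; exact h6.1⟩
      rw [e1, e2]
      by_cases hd : (k - (2*(n:ℤ) - 2*(i:ℤ) - 1)) % 4 = 3
      · rw [if_pos hd] at h5; rw [if_pos hd] at h6; exact Or.inl ⟨h5, h6.2⟩
      · rw [if_neg hd] at h5; rw [if_neg hd] at h6; exact Or.inr ⟨h5, h6.2⟩
    · rw [List.mem_reverse] at hvb
      have hL : (k + (2*(n:ℤ) - 2*(i:ℤ) - 1)) % 2 = 1 := by omega
      obtain ⟨rq, h1, h2, h3, h4, h5, h6, h7, h8⟩ := Bspin_nbrs hn hb hL hvb hx hxe hx2 hx4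
      have hup : rq ≤ n - 2 := by
        by_cases hd : (k + (2*(n:ℤ) - 2*(i:ℤ) - 1)) % 4 = 3
        · obtain ⟨he, _⟩ := h7 hd; omega
        · obtain ⟨he, _⟩ := h8 hd; omega
      rw [if_pos hup] at h6
      have e0 : pt (a ++ b.reverse) (2*n + 1 - rq) = pt b rq := pt_concat_b hla hlb (by omega)
      have e1 : pt (a ++ b.reverse) (2*n + 1 - rq - 1) = pt b (rq + 1) := by
        rw [(by omega : 2*n + 1 - rq - 1 = 2*n + 1 - (rq + 1))]
        exact pt_concat_b hla hlb (by omega)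
      have e2 : pt (a ++ b.reverse) (2*n + 1 - rq + 1) = pt b (rq - 1) := by
        rw [(by omega : 2*n + 1 - rq + 1 = 2*n + 1 - (rq - 1))]
        exact pt_concat_b hla hlb (by omega)
      refine ⟨2*n + 1 - rq, by omega, by omega, by rw [e0]; exact h3, ?_,
        by rw [e1]; exact h6.1, by rw [e2]; exact h4⟩
      rw [e1, e2]
      by_cases hd : (k + (2*(n:ℤ) - 2*(i:ℤ) - 1)) % 4 = 3
      · rw [if_pos hd] at h5; rw [if_pos hd] at h6; exact Or.inr ⟨h6.2, h5⟩
      · rw [if_neg hd] at h5; rw [if_neg hd] at h6; exact Or.inl ⟨h6.2, h5⟩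

lemma B_nbrs_mid {n : ℕ} {ε : ℝ} {i : ℕ} {k : ℤ} {p : List (ℝ × ℝ)}
    (hn : 2 ≤ n) (hp : p ∈ P (.B n ε) i k) (hik : (i, k) ∈ XB n)
    {v : ℝ × ℝ} (hv : v ∈ p) {x : ℤ} (hx : v.1 = (x:ℝ)) (hxe : x % 2 = 0)
    (hxm : x = 2*(n:ℤ) - 2 ∨ x = 2*(n:ℤ)) :
    ∃ r, 1 ≤ r ∧ r + 1 < p.length ∧ pt p r = v ∧
      ∃ ue we : ℝ × ℝ,
        ((pt p (r-1) = ue ∧ pt p (r+1) = we) ∨ (pt p (r-1) = we ∧ pt p (r+1) = ue)) ∧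
        ue.1 = (((if x = 2*(n:ℤ) - 2 then x - 2 else x + 2) : ℤ):ℝ) ∧
        (ue.2 = v.2 + 2 ∨ ue.2 = v.2 - 2) ∧
        we.1 = 2*(n:ℝ) - 1 ∧ (we.2 = v.2 + (1+ε) ∨ we.2 = v.2 - (1+ε)) := by
  have hx2 : 2 ≤ x := by omega
  have hx4 : x ≤ 4*(n:ℤ) - 4 := by omega
  have key : ∀ L : ℤ, L % 2 = 1 → ∀ q ∈ pathsBspin n ε L, v ∈ q →
      ∃ rq : ℕ, rq = n - 1 ∧ pt q rq = v ∧
        (pt q (rq-1)).1 = (((if x = 2*(n:ℤ) - 2 then x - 2 else x + 2) : ℤ):ℝ) ∧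
        ((pt q (rq-1)).2 = v.2 + 2 ∨ (pt q (rq-1)).2 = v.2 - 2) ∧
        (pt q (rq+1)).1 = 2*(n:ℝ) - 1 ∧
        ((pt q (rq+1)).2 = v.2 + (1+ε) ∨ (pt q (rq+1)).2 = v.2 - (1+ε)) := by
    intro L hL q hq hvq
    obtain ⟨rq, h1, h2, h3, h4, h5, h6, h7, h8⟩ := Bspin_nbrs hn hq hL hvq hx hxe hx2 hx4
    have hsplit : (L % 4 = 3 ∧ x = 2*(n:ℤ) - 2 ∧ rq = n - 1) ∨
        (L % 4 ≠ 3 ∧ x = 2*(n:ℤ) ∧ rq = n - 1) := by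
      by_cases hd : L % 4 = 3
      · obtain ⟨he, hr⟩ := h7 hd; left; exact ⟨hd, by omega, by omega⟩
      · obtain ⟨he, hr⟩ := h8 hd; right; exact ⟨hd, by omega, by omega⟩
    have hup : ¬ (rq ≤ n - 2) := by rcases hsplit with ⟨_, _, h⟩ | ⟨_, _, h⟩ <;> omega
    rw [if_neg hup] at h6
    rcases hsplit with ⟨hd, hxv, hr⟩ | ⟨hd, hxv, hr⟩
    · rw [if_pos hd] at h5
      rw [if_pos (by omega : x = 2*(n:ℤ) - 2)]
      exact ⟨rq, hr, h3, h5, h4, h6.1, h6.2⟩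
    · rw [if_neg hd] at h5
      rw [if_neg (by omega : ¬ x = 2*(n:ℤ) - 2)]
      exact ⟨rq, hr, h3, h5, h4, h6.1, h6.2⟩
  rcases B_decomp hp with ⟨hi, hq⟩ | ⟨hi, a, b, ha, hb, rfl, hxab, hyab⟩
  · have hL : k % 2 = 1 := by
      rcases XB_parity hik with ⟨_, h⟩ | ⟨_, h2, _⟩
      · exact h
      · omega
    obtain ⟨rq, hr, h3, h5, h4, h61, h62⟩ := key k hL p hq hv
    exact ⟨rq, by omega, by rw [Bspin_len hq]; omega, h3,
      pt p (rq-1), pt p (rq+1), Or.inl ⟨rfl, rfl⟩, h5, h4, h61, h62⟩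
  · have hk : k % 2 = 0 := by
      rcases XB_parity hik with ⟨h, _⟩ | ⟨_, _, h⟩
      · exact absurd h hi
      · exact h
    have hla := Bspin_len ha
    have hlb := Bspin_len hb
    have hlen := B_len_comp hla hlb
    rcases List.mem_append.1 hv with hva | hvb
    · have hL : (k - (2*(n:ℤ) - 2*(i:ℤ) - 1)) % 2 = 1 := by omega
      obtain ⟨rq, hr, h3, h5, h4, h61, h62⟩ := key _ hL a ha hva
      have e0 : pt (a ++ b.reverse) rq = pt a rq := pt_concat_a (by omega)
      have e1 : pt (a ++ b.reverse) (rq - 1) = pt a (rq - 1) := pt_concat_a (by omega)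
      have e2 : pt (a ++ b.reverse) (rq + 1) = pt a (rq + 1) := pt_concat_a (by omega)
      exact ⟨rq, by omega, by omega, by rw [e0]; exact h3,
        pt a (rq-1), pt a (rq+1), Or.inl ⟨e1, e2⟩, h5, h4, h61, h62⟩
    · rw [List.mem_reverse] at hvb
      have hL : (k + (2*(n:ℤ) - 2*(i:ℤ) - 1)) % 2 = 1 := by omega
      obtain ⟨rq, hr, h3, h5, h4, h61, h62⟩ := key _ hL b hb hvb
      have e0 : pt (a ++ b.reverse) (2*n + 1 - rq) = pt b rq := pt_concat_b hla hlb (by omega)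
      have e1 : pt (a ++ b.reverse) (2*n + 1 - rq - 1) = pt b (rq + 1) := by
        rw [(by omega : 2*n + 1 - rq - 1 = 2*n + 1 - (rq + 1))]
        exact pt_concat_b hla hlb (by omega)
      have e2 : pt (a ++ b.reverse) (2*n + 1 - rq + 1) = pt b (rq - 1) := by
        rw [(by omega : 2*n + 1 - rq + 1 = 2*n + 1 - (rq - 1))]
        exact pt_concat_b hla hlb (by omega)
      exact ⟨2*n + 1 - rq, by omega, by omega, by rw [e0]; exact h3,
        pt b (rq-1), pt b (rq+1), Or.inr ⟨e1, e2⟩, h5, h4, h61, h62⟩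

end Stmt7Bnbrs
section Stmt7Bsqueeze

lemma spin_val_id {n : ℕ} {ε : ℝ} {L : ℤ} {q : List (ℝ × ℝ)} (hn : 2 ≤ n)
    (hε : 0 < ε) (hε2 : ε < 1/2)
    (hq : q ∈ pathsBspin n ε L) (hL : L % 2 = 1) {y : ℝ}
    (hy : (2*(n:ℝ) - 1, y) ∈ q) {M₀ s₀ : ℤ} (hs₀ : s₀ = 1 ∨ s₀ = -1)
    (hyval : y = (M₀:ℝ) + s₀ * ε) :
    (pt q n).2 = y ∧ (M₀ + s₀) % 4 = (L + 3) % 4 := by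
  have hvq : ((2*(n:ℝ) - 1, y) : ℝ × ℝ) = pt q n := Bspin_spincol hn hq hL hy rfl
  obtain ⟨M, s, hs, hval, hmod4, hModd, hprev⟩ := Bspin_last hn hq hL
  have h2 : (pt q n).2 = y := by rw [← hvq]
  rw [h2, hyval] at hval
  obtain ⟨hM, hss⟩ := uniq_eps hε hε2 hs₀ hs hval
  rw [← h2] at hvq
  exact ⟨h2, by omega⟩

lemma B_squeeze {n T : ℕ} {ε : ℝ} (hn : 2 ≤ n) (hε : 0 < ε) (hε2 : ε < 1/2)
    {w : Fin T → ℕ × ℤ} (hw : IsSnake (.B n ε) w)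
    {ps : Fin T → List (ℝ × ℝ)} (hmem : ∀ u, ps u ∈ P (.B n ε) (w u).1 (w u).2)
    (hno : NonOverlapping ps) {t s : Fin T} (hts : t < s) {l : ℤ} (hl : l % 2 = 0)
    (hvt : ((2*(n:ℝ) - 1, (l:ℝ) - 1 + ε) : ℝ × ℝ) ∈ ps t)
    (hvs : ((2*(n:ℝ) - 1, (l:ℝ) + 1 - ε) : ℝ × ℝ) ∈ ps s) : False := by
  have hikt : ((w t).1, (w t).2) ∈ XB n := hw.1 t
  have hiks : ((w s).1, (w s).2) ∈ XB n := hw.1 s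
  have hSAts := hno t s hts
  -- the main strict inequality between the two distinguished values holds trivially : -1+ε < 1-ε
  -- analyse the component of ps t containing its value
  have hytval : (l:ℝ) - 1 + ε = (((l - 1 : ℤ)):ℝ) + (1:ℤ) * ε := by push_cast; ring
  have hysval : (l:ℝ) + 1 - ε = (((l + 1 : ℤ)):ℝ) + (-1:ℤ) * ε := by push_cast; ring
  have hT : ∃ Lt : ℤ, l % 4 = (Lt + 3) % 4 ∧
      (((w t).1 = n ∧ Lt = (w t).2) ∨
       ((w t).1 < n ∧ Lt = (w t).2 - (2*(n:ℤ) - 2*((w t).1:ℤ) - 1))) := by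
    rcases B_decomp (hmem t) with ⟨hi, hq⟩ | ⟨hi, a, b, ha, hb, hpeq, hxab, hyab⟩
    · have hL : (w t).2 % 2 = 1 := by
        rcases XB_parity hikt with ⟨_, h⟩ | ⟨_, h2, _⟩
        · exact h
        · omega
      obtain ⟨_, hcl⟩ := spin_val_id hn hε hε2 hq hL hvt (Or.inl rfl) hytval
      exact ⟨(w t).2, by omega, Or.inl ⟨hi, rfl⟩⟩
    · have hk : (w t).2 % 2 = 0 := by
        rcases XB_parity hikt with ⟨h, _⟩ | ⟨_, _, h⟩
        · exact absurd h hi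
        · exact h
      have hin : (w t).1 < n := by
        rcases XB_parity hikt with ⟨h, _⟩ | ⟨_, h, _⟩
        · exact absurd h hi
        · exact h
      rw [hpeq] at hvt
      rcases List.mem_append.1 hvt with hva | hvb
      · have hL : ((w t).2 - (2*(n:ℤ) - 2*((w t).1:ℤ) - 1)) % 2 = 1 := by omega
        obtain ⟨_, hcl⟩ := spin_val_id hn hε hε2 ha hL hva (Or.inl rfl) hytval
        exact ⟨_, by omega, Or.inr ⟨hin, rfl⟩⟩
      · exfalso
        rw [List.mem_reverse] at hvb
        have hLa : ((w t).2 - (2*(n:ℤ) - 2*((w t).1:ℤ) - 1)) % 2 = 1 := by omega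
        have hLb : ((w t).2 + (2*(n:ℤ) - 2*((w t).1:ℤ) - 1)) % 2 = 1 := by omega
        obtain ⟨hbn, _⟩ := spin_val_id hn hε hε2 hb hLb hvb (Or.inl rfl) hytval
        obtain ⟨Ma, sa, hsa, hyaval, _, hMaodd, _⟩ := Bspin_last hn ha hLa
        -- the point (pt a n) is a point of ps t on the spin column, strictly above the value
        have hamem : pt a n ∈ ps t := by
          rw [hpeq]; exact List.mem_append_left _ (pt_mem (by rw [Bspin_len ha]; omega))
        have haxx : (pt a n).1 = 2*(n:ℝ) - 1 := (Bspin_x ha hLa).2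
        have hup : (pt a n).2 < (l:ℝ) + 1 - ε := by
          have := hSAts (pt a n) hamem _ hvs haxx
          exact this
        have hlow : (l:ℝ) - 1 + ε < (pt a n).2 := by linarith
        rw [hyaval] at hup hlow
        exact no_mid hε hε2 hMaodd hl hsa hlow hup
  have hS : ∃ Ls : ℤ, l % 4 = (Ls + 3) % 4 ∧
      (((w s).1 = n ∧ Ls = (w s).2) ∨
       ((w s).1 < n ∧ Ls = (w s).2 + (2*(n:ℤ) - 2*((w s).1:ℤ) - 1))) := by
    rcases B_decomp (hmem s) with ⟨hi, hq⟩ | ⟨hi, a, b, ha, hb, hpeq, hxab, hyab⟩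
    · have hL : (w s).2 % 2 = 1 := by
        rcases XB_parity hiks with ⟨_, h⟩ | ⟨_, h2, _⟩
        · exact h
        · omega
      obtain ⟨_, hcl⟩ := spin_val_id hn hε hε2 hq hL hvs (Or.inr rfl) hysval
      exact ⟨(w s).2, by omega, Or.inl ⟨hi, rfl⟩⟩
    · have hk : (w s).2 % 2 = 0 := by
        rcases XB_parity hiks with ⟨h, _⟩ | ⟨_, _, h⟩
        · exact absurd h hi
        · exact h
      have hin : (w s).1 < n := by
        rcases XB_parity hiks with ⟨h, _⟩ | ⟨_, h, _⟩
        · exact absurd h hi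
        · exact h
      rw [hpeq] at hvs
      rcases List.mem_append.1 hvs with hva | hvb
      · exfalso
        have hLa : ((w s).2 - (2*(n:ℤ) - 2*((w s).1:ℤ) - 1)) % 2 = 1 := by omega
        have hLb : ((w s).2 + (2*(n:ℤ) - 2*((w s).1:ℤ) - 1)) % 2 = 1 := by omega
        obtain ⟨han, _⟩ := spin_val_id hn hε hε2 ha hLa hva (Or.inr rfl) hysval
        obtain ⟨Mb, sb, hsb, hybval, _, hMbodd, _⟩ := Bspin_last hn hb hLb
        have hbmem : pt b n ∈ ps s := by
          rw [hpeq]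
          refine List.mem_append_right _ ?_
          rw [List.mem_reverse]
          exact pt_mem (by rw [Bspin_len hb]; omega)
        have hbxx : (pt b n).1 = 2*(n:ℝ) - 1 := (Bspin_x hb hLb).2
        have hlow : (l:ℝ) - 1 + ε < (pt b n).2 := by
          have := hSAts _ hvt (pt b n) hbmem (by rw [hbxx])
          exact this
        have hup : (pt b n).2 < (l:ℝ) + 1 - ε := by linarith
        rw [hybval] at hup hlow
        exact no_mid hε hε2 hMbodd hl hsb hlow hup
      · rw [List.mem_reverse] at hvb
        have hLb : ((w s).2 + (2*(n:ℤ) - 2*((w s).1:ℤ) - 1)) % 2 = 1 := by omega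
        obtain ⟨_, hcl⟩ := spin_val_id hn hε hε2 hb hLb hvb (Or.inr rfl) hysval
        exact ⟨_, by omega, Or.inr ⟨hin, rfl⟩⟩
  obtain ⟨Lt, hclt, hcaset⟩ := hT
  obtain ⟨Ls, hcls, hcases⟩ := hS
  -- adjacency
  have hadj : ((s:ℕ)) = (t:ℕ) + 1 := by
    by_contra hne
    have hmidlt : (t:ℕ) + 1 < (s:ℕ) := by
      have := hts
      rw [Fin.lt_def] at this
      omega
    have hult : (t:ℕ) + 1 < T := by have := s.isLt; omega
    set u : Fin T := ⟨(t:ℕ) + 1, hult⟩ with hu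
    have htu : t < u := by rw [Fin.lt_def]; simp [hu]
    have hus : u < s := by rw [Fin.lt_def]; simp [hu]; omega
    obtain ⟨vu, hvu, hvux⟩ := B_exists_spinval hn (hmem u) (hw.1 u)
    obtain ⟨Mu, su, cu, hsu, hvuval, hMuodd, _, _⟩ := B_spinpt hn (hmem u) (hw.1 u) hvu hvux
    have h1 : (l:ℝ) - 1 + ε < vu.2 := hno t u htu _ hvt vu hvu (by rw [hvux])
    have h2 : vu.2 < (l:ℝ) + 1 - ε := hno u s hus vu hvu _ hvs hvux
    rw [hvuval] at h1 h2
    exact no_mid hε hε2 hMuodd hl hsu h1 h2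
  have hsnake : SnakePos (.B n ε) (w t) (w s) := by
    have hult : (t:ℕ) + 1 < T := by have := s.isLt; omega
    have heq : (⟨(t:ℕ) + 1, hult⟩ : Fin T) = s := by
      apply Fin.ext; simp; omega
    have := hw.2 t hult
    rwa [heq] at this
  -- parity contradiction
  simp only [SnakePos] at hsnake
  rcases hcaset with ⟨hit, hLt⟩ | ⟨hit, hLt⟩ <;> rcases hcases with ⟨his, hLs⟩ | ⟨his, hLs⟩
  · rw [if_pos ⟨hit, his⟩] at hsnake
    omega
  · rw [if_neg (by omega), if_pos (Or.inl hit)] at hsnake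
    have habs : |((w s).1:ℤ) - ((w t).1:ℤ)| = ((w t).1:ℤ) - (w s).1 := by
      rw [abs_of_nonpos (by omega)]; ring
    rw [habs] at hsnake
    omega
  · rw [if_neg (by omega), if_pos (Or.inr his)] at hsnake
    have habs : |((w s).1:ℤ) - ((w t).1:ℤ)| = ((w s).1:ℤ) - (w t).1 := by
      rw [abs_of_nonneg (by omega)]
    rw [habs] at hsnake
    omega
  · rw [if_neg (by omega), if_neg (by omega)] at hsnake
    rcases abs_cases (((w s).1:ℤ) - ((w t).1:ℤ)) with ⟨habs, _⟩ | ⟨habs, _⟩ <;>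
      rw [habs] at hsnake <;> omega

end Stmt7Bsqueeze
section Stmt7Biota

lemma iota_facts {n j : ℕ} {l : ℤ} (hn : 2 ≤ n) (h1 : 1 ≤ j) (h2 : j < n) :
    ((iotaB n (j, l-2)).1 = 2*(j:ℤ) ∨ (iotaB n (j, l-2)).1 = 4*(n:ℤ) - 2 - 2*(j:ℤ)) ∧
    (iotaB n (j, l+2)).1 = (iotaB n (j, l-2)).1 ∧
    (iotaB n (j, l-2)).2 = l - 2 ∧ (iotaB n (j, l+2)).2 = l + 2 := by
  have hjn : j ≠ n := by omega
  simp only [iotaB, if_neg hjn]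
  by_cases hc : (2*(n:ℤ) + (l - 2) - 2*(j:ℤ)) % 4 = 2
  · rw [if_pos hc, if_pos (by omega : (2*(n:ℤ) + (l + 2) - 2*(j:ℤ)) % 4 = 2)]
    exact ⟨Or.inl rfl, rfl, rfl, rfl⟩
  · rw [if_neg hc, if_neg (by omega : ¬ (2*(n:ℤ) + (l + 2) - 2*(j:ℤ)) % 4 = 2)]
    exact ⟨Or.inr rfl, rfl, rfl, rfl⟩

lemma B_even_unique {n : ℕ} {ε : ℝ} {i : ℕ} {k : ℤ} {p : List (ℝ × ℝ)}
    (hn : 2 ≤ n) (hp : p ∈ P (.B n ε) i k) (hik : (i, k) ∈ XB n)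
    {v v' : ℝ × ℝ} (hv : v ∈ p) (hv' : v' ∈ p) {x : ℤ}
    (hx : v.1 = (x:ℝ)) (hx' : v'.1 = (x:ℝ)) (hxe : x % 2 = 0) : v = v' := by
  have key : ∀ L : ℤ, L % 2 = 1 → ∀ q ∈ pathsBspin n ε L, v ∈ q → v' ∈ q → v = v' := by
    intro L hL q hq hvq hvq'
    obtain ⟨r, hr, hrv, hxif, _⟩ := Bspin_evencol hn hq hL hvq hx hxe
    obtain ⟨r', hr', hrv', hxif', _⟩ := Bspin_evencol hn hq hL hvq' hx' hxe
    have : r = r' := by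
      by_cases h3 : L % 4 = 3
      · rw [if_pos h3] at hxif hxif'; omega
      · rw [if_neg h3] at hxif hxif'; omega
    rw [← hrv, ← hrv', this]
  have keyrange : ∀ L : ℤ, L % 2 = 1 → ∀ q ∈ pathsBspin n ε L, v ∈ q →
      (L % 4 = 3 → x ≤ 2*(n:ℤ) - 2) ∧ (L % 4 ≠ 3 → 2*(n:ℤ) ≤ x) := by
    intro L hL q hq hvq
    obtain ⟨r, hr, hrv, hxif, _⟩ := Bspin_evencol hn hq hL hvq hx hxe
    constructor
    · intro h3; rw [if_pos h3] at hxif; omega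
    · intro h3; rw [if_neg h3] at hxif; omega
  have keyrange' : ∀ L : ℤ, L % 2 = 1 → ∀ q ∈ pathsBspin n ε L, v' ∈ q →
      (L % 4 = 3 → x ≤ 2*(n:ℤ) - 2) ∧ (L % 4 ≠ 3 → 2*(n:ℤ) ≤ x) := by
    intro L hL q hq hvq
    obtain ⟨r, hr, hrv, hxif, _⟩ := Bspin_evencol hn hq hL hvq hx' hxe
    constructor
    · intro h3; rw [if_pos h3] at hxif; omega
    · intro h3; rw [if_neg h3] at hxif; omega
  rcases B_decomp hp with ⟨hi, hq⟩ | ⟨hi, a, b, ha, hb, rfl, hxab, hyab⟩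
  · have hL : k % 2 = 1 := by
      rcases XB_parity hik with ⟨_, h⟩ | ⟨_, h2, _⟩
      · exact h
      · omega
    exact key k hL p hq hv hv'
  · have hk : k % 2 = 0 := by
      rcases XB_parity hik with ⟨h, _⟩ | ⟨_, _, h⟩
      · exact absurd h hi
      · exact h
    have hLa : (k - (2*(n:ℤ) - 2*(i:ℤ) - 1)) % 2 = 1 := by omega
    have hLb : (k + (2*(n:ℤ) - 2*(i:ℤ) - 1)) % 2 = 1 := by omega
    have hdirs : ¬ ((k - (2*(n:ℤ) - 2*(i:ℤ) - 1)) % 4 = 3 ↔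
        (k + (2*(n:ℤ) - 2*(i:ℤ) - 1)) % 4 = 3) := by omega
    rcases List.mem_append.1 hv with hva | hvb <;>
      rcases List.mem_append.1 hv' with hva' | hvb'
    · exact key _ hLa a ha hva hva'
    · exfalso
      rw [List.mem_reverse] at hvb'
      have r1 := keyrange _ hLa a ha hva
      have r2 := keyrange' _ hLb b hb hvb'
      by_cases h3 : (k - (2*(n:ℤ) - 2*(i:ℤ) - 1)) % 4 = 3
      · have := r1.1 h3
        have := r2.2 (by omega)
        omega
      · have := r1.2 h3
        have := r2.1 (by omega)
        omega
    · exfalso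
      rw [List.mem_reverse] at hvb
      have r1 := keyrange _ hLb b hb hvb
      have r2 := keyrange' _ hLa a ha hva'
      by_cases h3 : (k - (2*(n:ℤ) - 2*(i:ℤ) - 1)) % 4 = 3
      · have := r2.1 h3
        have := r1.2 (by omega)
        omega
      · have := r2.2 h3
        have := r1.1 (by omega)
        omega
    · rw [List.mem_reverse] at hvb hvb'
      exact key _ hLb b hb hvb hvb'

end Stmt7Biota
section Stmt7Bmain

lemma B_lower_iff {n T : ℕ} {ε : ℝ} (hn : 2 ≤ n) (hε : 0 < ε) (hε2 : ε < 1/2)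
    {w : Fin T → ℕ × ℤ} (hw : IsSnake (.B n ε) w)
    {ps : Fin T → List (ℝ × ℝ)} (hmem : ∀ u, ps u ∈ P (.B n ε) (w u).1 (w u).2)
    (hno : NonOverlapping ps) (t : Fin T) {j : ℕ} {l : ℤ}
    (hjl : (j, l) ∈ W (.B n ε)) (p' : List (ℝ × ℝ))
    (hlow : LoweredTo (.B n ε) (w t).1 (w t).2 j l (ps t) p') :
    ¬ NonOverlapping (Function.update ps t p') ↔
      ∃ s : Fin T, t < s ∧
        ((j, l + (rr (.B n ε) j : ℤ)) ∈ Cp (.B n ε) (ps s) true ∨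
         (j, l - (rr (.B n ε) j : ℤ)) ∈ Cp (.B n ε) (ps s) false) := by
  obtain ⟨hptP, hp'P, hcan, hrep⟩ := hlow
  have hikt : ((w t).1, (w t).2) ∈ XB n := hw.1 t
  have hrepB : (if j = n then
       Replace1 (ps t) p' (2 * (n:ℝ) - 1, (l:ℝ) - 1 - ε) (2 * (n:ℝ) - 1, (l:ℝ) + 1 + ε)
     else if j = n - 1 then
       Replace2 (ps t) p' (((iotaB n (j, l - 2)).1:ℝ), (l:ℝ) - 2)
         (((iotaB n (j, l - 2)).1:ℝ), (l:ℝ) + 2)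
         (2 * (n:ℝ) - 1, (l:ℝ) - 1 + ε) (2 * (n:ℝ) - 1, (l:ℝ) + 1 - ε)
     else
       Replace1 (ps t) p' (((iotaB n (j, l - 2)).1:ℝ), (l:ℝ) - 2)
         (((iotaB n (j, l - 2)).1:ℝ), (l:ℝ) + 2)) := hrep
  have hjlB : (j, l - ((if j = n then 1 else 2 : ℕ):ℤ)) ∈ XB n := hjl
  have hrrB : (rr (.B n ε) j : ℤ) = ((if j = n then 1 else 2 : ℕ):ℤ) := rfl
  rw [not_no_update hno t p']
  by_cases hjn : j = n
  · -- spin case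
    rw [if_pos hjn] at hrepB hjlB
    rw [hrrB, if_pos hjn]
    have hl : l % 2 = 0 := by
      rcases hjlB with ⟨_, hpar⟩ | ⟨_, hj2, _⟩
      · omega
      · omega
    obtain ⟨hq_mem, hq'_mem, hmemsplit⟩ := replace1_mem hrepB
    have clash : ∀ s : Fin T, t < s → ((2*(n:ℝ) - 1, (l:ℝ) + 1 + ε) : ℝ × ℝ) ∈ ps s → False := by
      intro s hts hmem2
      obtain ⟨M2, s2, c2, hs2, hval2, hM2odd, hc2, hnb2⟩ :=
        B_spinpt hn (hmem s) (hw.1 s) hmem2 rfl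
      have hval2' : (l:ℝ) + 1 + ε = (M2:ℝ) + s2*ε := hval2
      obtain ⟨hM2, hs2v⟩ := uniq_eps hε hε2 (Or.inl rfl) hs2
        (show ((l+1:ℤ):ℝ) + ((1:ℤ):ℝ)*ε = (M2:ℝ) + s2*ε by rw [← hval2']; push_cast; ring)
      obtain ⟨Mt, st, ct, hst, hvalt, hMtodd, hct, hnbt⟩ :=
        B_spinpt hn (hmem t) hikt hq_mem rfl
      have hvalt' : (l:ℝ) - 1 - ε = (Mt:ℝ) + st*ε := hvalt
      obtain ⟨hMt, hstv⟩ := uniq_eps hε hε2 (Or.inr rfl) hst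
        (show ((l-1:ℤ):ℝ) + ((-1:ℤ):ℝ)*ε = (Mt:ℝ) + st*ε by rw [← hvalt']; push_cast; ring)
      have hceq : ct = c2 := by omega
      have hyt : ((Mt - st:ℤ):ℝ) = (l:ℝ) := by rw [← hMt, ← hstv]; push_cast; ring
      have hy2 : ((M2 - s2:ℤ):ℝ) = (l:ℝ) := by rw [← hM2, ← hs2v]; push_cast; ring
      have := hno t s hts _ hnbt _ hnb2 (by rw [hceq])
      rw [hyt, hy2] at this
      exact lt_irrefl _ this
    constructor
    · rintro (⟨s, hts, hs⟩ | ⟨s, hst, hs⟩)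
      swap
      · exfalso
        apply hs
        refine SA_low ?_ (hno s t hst)
        intro a ha
        rcases hmemsplit a ha with rfl | hain
        · exact ⟨_, hq_mem, rfl, by
            show (l:ℝ) - 1 - ε ≤ (l:ℝ) + 1 + ε; linarith⟩
        · exact ⟨a, hain, rfl, le_refl _⟩
      simp only [StrictlyAbove] at hs
      push_neg at hs
      obtain ⟨a, ha, b, hb, hxab, hyab⟩ := hs
      rcases hmemsplit a ha with rfl | hain
      swap
      · exact absurd (hno t s hts a hain b hb hxab) (not_lt.2 hyab)
      have hbx : b.1 = 2*(n:ℝ) - 1 := by rw [← hxab]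
      obtain ⟨M, s0, c0, hs0, hval, hModd, hc0, hnb⟩ := B_spinpt hn (hmem s) (hw.1 s) hb hbx
      have hblow : (l:ℝ) - 1 - ε < b.2 := hno t s hts _ hq_mem b hb hxab
      have hbup : b.2 ≤ (l:ℝ) + 1 + ε := hyab
      have hse : (s0:ℝ)*ε ≤ ε ∧ -ε ≤ (s0:ℝ)*ε := by
        rcases hs0 with rfl | rfl <;> constructor <;> push_cast <;> linarith
      have hMrange : M = l - 1 ∨ M = l + 1 := by
        rw [hval] at hblow hbup
        have hlo : l - 1 ≤ M := by
          by_contra hcon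
          push_neg at hcon
          have : (M:ℝ) ≤ (l:ℝ) - 2 := by exact_mod_cast (by omega : M ≤ l - 2)
          linarith [hse.1]
        have hhi : M ≤ l + 1 := by
          by_contra hcon
          push_neg at hcon
          have : (l:ℝ) + 2 ≤ (M:ℝ) := by exact_mod_cast (by omega : l + 2 ≤ M)
          linarith [hse.2]
        omega
      have hbpt : b = (2*(n:ℝ) - 1, (M:ℝ) + s0*ε) := Prod.ext_iff.2 ⟨hbx, hval⟩
      rcases hMrange with hM | hM <;> rcases hs0 with hsv | hsv
      · -- M = l-1, s0 = 1 : lower corner at (n, l-1)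
        refine ⟨s, hts, Or.inr ?_⟩
        simp only [Cp, Set.mem_setOf_eq]
        refine ⟨Or.inl ⟨hjn, by omega⟩, Or.inr ⟨hjn, ?_⟩⟩
        simp only [Bool.false_eq_true, if_false]
        constructor
        · have heq : ((2*(n:ℝ) - 1, ((l - ((1:ℕ):ℤ):ℤ):ℝ) + ε) : ℝ × ℝ) = b := by
            rw [hbpt, hM, hsv, Prod.ext_iff]; exact ⟨rfl, by push_cast; ring⟩
          rw [heq]; exact hb
        · intro hcon
          have h2 := hno t s hts _ hq_mem _ hcon rfl
          simp only at h2
          push_cast at h2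
          linarith
      · -- M = l-1, s0 = -1 : contradiction with strictness
        exfalso
        rw [hval, hM, hsv] at hblow
        push_cast at hblow
        linarith
      · -- M = l+1, s0 = 1 : clash
        exfalso
        apply clash s hts
        have heq : b = ((2*(n:ℝ) - 1, (l:ℝ) + 1 + ε) : ℝ × ℝ) := by
          rw [hbpt, hM, hsv, Prod.ext_iff]; exact ⟨rfl, by push_cast; ring⟩
        rw [← heq]; exact hb
      · -- M = l+1, s0 = -1 : upper corner at (n, l+1)
        refine ⟨s, hts, Or.inl ?_⟩
        simp only [Cp, Set.mem_setOf_eq]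
        refine ⟨Or.inl ⟨hjn, by omega⟩, Or.inr ⟨hjn, ?_⟩⟩
        simp only [if_true]
        constructor
        · have heq : ((2*(n:ℝ) - 1, ((l + ((1:ℕ):ℤ):ℤ):ℝ) - ε) : ℝ × ℝ) = b := by
            rw [hbpt, hM, hsv, Prod.ext_iff]; exact ⟨rfl, by push_cast; ring⟩
          rw [heq]; exact hb
        · intro hcon
          refine clash s hts ?_
          have heq : ((2*(n:ℝ) - 1, (l:ℝ) + 1 + ε) : ℝ × ℝ) =
              (2*(n:ℝ) - 1, ((l + ((1:ℕ):ℤ):ℤ):ℝ) + ε) := by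
            rw [Prod.ext_iff]; exact ⟨rfl, by push_cast; ring⟩
          rw [heq]; exact hcon
    · rintro ⟨s, hts, hC | hC⟩ <;> simp only [Cp, Set.mem_setOf_eq] at hC <;>
        left <;> refine ⟨s, hts, ?_⟩ <;> intro hSA
      · rcases hC.2 with ⟨r, _, _, _, _, hne, _, _⟩ | ⟨_, hC2⟩
        · exact hne (by simp [iotaB, hjn])
        · simp only [if_true] at hC2
          have h3 := hSA _ hq'_mem _ hC2.1 rfl
          simp only at h3
          push_cast at h3
          linarith
      · rcases hC.2 with ⟨r, _, _, _, _, hne, _, _⟩ | ⟨_, hC2⟩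
        · exact hne (by simp [iotaB, hjn])
        · simp only [Bool.false_eq_true, if_false] at hC2
          have h3 := hSA _ hq'_mem _ hC2.1 rfl
          simp only at h3
          push_cast at h3
          linarith
  · -- even cases (j < n)
    rw [if_neg hjn] at hrepB hjlB
    rw [hrrB, if_neg hjn]
    simp only [Nat.cast_ofNat]
    have hj1' : 1 ≤ j := by
      rcases hjlB with ⟨hjq, _⟩ | ⟨h1, h2, h3⟩
      · exact absurd hjq hjn
      · exact h1
    have hjltn : j < n := by
      rcases hjlB with ⟨hjq, _⟩ | ⟨h1, h2, h3⟩
      · exact absurd hjq hjn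
      · exact h2
    have hl : l % 2 = 0 := by
      rcases hjlB with ⟨hjq, _⟩ | ⟨h1, h2, h3⟩
      · exact absurd hjq hjn
      · omega
    obtain ⟨hxor, hiotap, hiotam2, hiotap2⟩ := iota_facts (l := l) hn hj1' hjltn
    set x : ℤ := (iotaB n (j, l - 2)).1 with hxdef
    have hnn : (2:ℤ) ≤ (n:ℤ) := by exact_mod_cast hn
    have hjn' : (j:ℤ) < (n:ℤ) := by exact_mod_cast hjltn
    have hjz : 1 ≤ (j:ℤ) := by exact_mod_cast hj1'
    have hxe : x % 2 = 0 := by omega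
    have hx2 : 2 ≤ x := by omega
    have hx4 : x ≤ 4*(n:ℤ) - 4 := by omega
    have hmidiff : (x = 2*(n:ℤ) - 2 ∨ x = 2*(n:ℤ)) ↔ j = n - 1 := by
      have hc : ((n - 1 : ℕ):ℤ) = (n:ℤ) - 1 := by
        push_cast [Nat.cast_sub (by omega : 1 ≤ n)]; ring
      constructor
      · intro h
        have h2 : (j:ℤ) = ((n - 1:ℕ):ℤ) := by
          rw [hc]
          rcases hxor with hx | hx <;> rcases h with h | h <;> omega
        exact_mod_cast h2
      · intro h
        have h2 : (j:ℤ) = ((n - 1:ℕ):ℤ) := by exact_mod_cast h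
        rw [hc] at h2
        rcases hxor with hx | hx
        · left; omega
        · right; omega
    -- the class pinning : a point of ps s on column x strictly between l-2 and l+2 has height l+2
    have hq1t : (((x:ℝ), (l:ℝ) - 2) : ℝ × ℝ) ∈ ps t := by
      by_cases hjm : j = n - 1
      · rw [if_pos hjm] at hrepB
        exact (replace2_mem hrepB).1
      · rw [if_neg hjm] at hrepB
        exact (replace1_mem hrepB).1
    have hq1p : (((x:ℝ), (l:ℝ) + 2) : ℝ × ℝ) ∈ p' := by
      by_cases hjm : j = n - 1
      · rw [if_pos hjm] at hrepB
        exact (replace2_mem hrepB).2.2.1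
      · rw [if_neg hjm] at hrepB
        exact (replace1_mem hrepB).2.1
    have hclt : (l - 2) % 4 = (2*(n:ℤ) + 2 + x) % 4 := by
      obtain ⟨mt, hmt, hmtmod⟩ := B_evenpt hn (hmem t) hikt hq1t rfl hxe
      have : mt = l - 2 := by
        have h2 : (mt:ℝ) = (l:ℝ) - 2 := by rw [← hmt]
        exact_mod_cast h2
      omega
    have pin : ∀ s : Fin T, t < s → ∀ b, b ∈ ps s → b.1 = (x:ℝ) → b.2 ≤ (l:ℝ) + 2 →
        b.2 = (l:ℝ) + 2 := by
      intro s hts b hb hbx hbup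
      obtain ⟨m, hm, hmmod⟩ := B_evenpt hn (hmem s) (hw.1 s) hb hbx hxe
      have hblow : (l:ℝ) - 2 < b.2 := hno t s hts _ hq1t b hb hbx.symm
      rw [hm] at hblow hbup ⊢
      have h1 : l - 2 < m := by exact_mod_cast hblow
      have h2 : m ≤ l + 2 := by exact_mod_cast hbup
      have : m = l + 2 := by omega
      rw [this]; push_cast; ring
    -- the point of ps t at an even neighbouring column c has height l
    have key_t : ∀ c : ℤ, c % 2 = 0 → (c = x - 2 ∨ c = x + 2) →
        (∃ u, u ∈ ps t ∧ u.1 = (c:ℝ) ∧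
          (u.2 = (l:ℝ) ∨ u.2 = (l:ℝ) - 4)) → (∃ u', u' ∈ p' ∧ u'.1 = (c:ℝ) ∧
          (u'.2 = (l:ℝ) ∨ u'.2 = (l:ℝ) + 4)) → (((c:ℝ), (l:ℝ)) : ℝ × ℝ) ∈ ps t := by
      intro c hce hcc ⟨u, hu, hux, huy⟩ ⟨u', hu', hux', huy'⟩
      have hcx : c ≠ x := by omega
      have hu'in : u' ∈ ps t := by
        by_cases hjm : j = n - 1
        · rw [if_pos hjm] at hrepB
          rcases (replace2_mem hrepB).2.2.2.2 u' hu' with rfl | rfl | h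
          · exfalso
            have h9 : ((x:ℝ)) = (c:ℝ) := hux'
            exact hcx (by exact_mod_cast h9.symm)
          · exfalso
            have h2 : (2*(n:ℝ) - 1) = (c:ℝ) := hux'
            have h3 : ((2*(n:ℤ) - 1 : ℤ):ℝ) = (c:ℝ) := by push_cast; linarith
            have : (2*(n:ℤ) - 1) = c := by exact_mod_cast h3
            omega
          · exact h
        · rw [if_neg hjm] at hrepB
          rcases (replace1_mem hrepB).2.2 u' hu' with rfl | h
          · exfalso
            have h9 : ((x:ℝ)) = (c:ℝ) := hux'
            exact hcx (by exact_mod_cast h9.symm)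
          · exact h
      have huu : u = u' := B_even_unique hn (hmem t) hikt hu hu'in hux hux' hce
      have huy2 : u.2 = (l:ℝ) := by
        rcases huy with h | h
        · exact h
        · exfalso
          rw [huu] at h
          rcases huy' with h' | h' <;> rw [h'] at h <;> linarith
      have : (((c:ℝ), (l:ℝ)) : ℝ × ℝ) = u := by
        rw [Prod.ext_iff]
        exact ⟨hux.symm, huy2.symm⟩
      rw [this]; exact hu
    by_cases hjm : j = n - 1
    · -- case j = n - 1
      rw [if_pos hjm] at hrepB
      obtain ⟨hq1, hq2, hq1', hq2', hmemsplit⟩ := replace2_mem hrepB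
      have hxmid : x = 2*(n:ℤ) - 2 ∨ x = 2*(n:ℤ) := hmidiff.2 hjm
      set c : ℤ := if x = 2*(n:ℤ) - 2 then x - 2 else x + 2 with hcdef
      have hce : c % 2 = 0 := by
        by_cases hcc : x = 2*(n:ℤ) - 2
        · rw [hcdef, if_pos hcc]; omega
        · rw [hcdef, if_neg hcc]; omega
      have hcne : c ≠ x := by
        by_cases hcc : x = 2*(n:ℤ) - 2
        · rw [hcdef, if_pos hcc]; omega
        · rw [hcdef, if_neg hcc]; omega
      -- ps t has the point (c, l)
      have hkt : (((c:ℝ), (l:ℝ)) : ℝ × ℝ) ∈ ps t := by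
        obtain ⟨rt, ht1, ht2, ht3, ue, we, hor, hue1, hue2, hwe1, hwe2⟩ :=
          B_nbrs_mid hn (hmem t) hikt hq1 rfl hxe hxmid
        obtain ⟨rp, hp1, hp2, hp3, ue', we', hor', hue1', hue2', hwe1', hwe2'⟩ :=
          B_nbrs_mid hn hp'P hikt hq1p rfl hxe hxmid
        have hccd : c = x - 2 ∨ c = x + 2 := by
          by_cases hcc : x = 2*(n:ℤ) - 2
          · rw [hcdef, if_pos hcc]; left; rfl
          · rw [hcdef, if_neg hcc]; right; rfl
        refine key_t c hce hccd ⟨ue, ?_, hue1, ?_⟩ ⟨ue', ?_, hue1', ?_⟩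
        · rcases hor with ⟨h1, _⟩ | ⟨_, h2⟩
          · rw [← h1]; exact pt_mem (by omega)
          · rw [← h2]; exact pt_mem (by omega)
        · rcases hue2 with h | h
          · left; rw [h]; show (l:ℝ) - 2 + 2 = l; ring
          · right; rw [h]; show (l:ℝ) - 2 - 2 = l - 4; ring
        · rcases hor' with ⟨h1, _⟩ | ⟨_, h2⟩
          · rw [← h1]; exact pt_mem (by omega)
          · rw [← h2]; exact pt_mem (by omega)
        · rcases hue2' with h | h
          · right; rw [h]; show (l:ℝ) + 2 + 2 = l + 4; ring
          · left; rw [h]; show (l:ℝ) + 2 - 2 = l; ring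
      constructor
      · rintro (⟨s, hts, hs⟩ | ⟨s, hst, hs⟩)
        swap
        · exfalso
          apply hs
          refine SA_low ?_ (hno s t hst)
          intro a ha
          rcases hmemsplit a ha with rfl | rfl | hain
          · exact ⟨_, hq1, rfl, by show (l:ℝ) - 2 ≤ (l:ℝ) + 2; linarith⟩
          · exact ⟨_, hq2, rfl, by show (l:ℝ) - 1 + ε ≤ (l:ℝ) + 1 - ε; linarith⟩
          · exact ⟨a, hain, rfl, le_refl _⟩
        simp only [StrictlyAbove] at hs
        push_neg at hs
        obtain ⟨a, ha, b, hb, hxab, hyab⟩ := hs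
        rcases hmemsplit a ha with rfl | rfl | hain
        swap
        · -- violation through the spin column : impossible by the squeeze
          exfalso
          have hbx : b.1 = 2*(n:ℝ) - 1 := by rw [← hxab]
          have hblow : (l:ℝ) - 1 + ε < b.2 := hno t s hts _ hq2 b hb hxab
          have hbup : b.2 ≤ (l:ℝ) + 1 - ε := hyab
          obtain ⟨M, s0, c0, hs0, hval, hModd, hc0, hnb⟩ :=
            B_spinpt hn (hmem s) (hw.1 s) hb hbx
          rcases lt_or_eq_of_le hbup with hlt | heqv
          · rw [hval] at hblow hlt
            exact no_mid hε hε2 hModd hl hs0 hblow hlt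
          · refine B_squeeze hn hε hε2 hw hmem hno hts hl hq2 ?_
            have : b = ((2*(n:ℝ) - 1, (l:ℝ) + 1 - ε) : ℝ × ℝ) := by
              rw [Prod.ext_iff]; exact ⟨hbx, heqv⟩
            rw [← this]; exact hb
        swap
        · exact absurd (hno t s hts a hain b hb hxab) (not_lt.2 hyab)
        -- violation through column x
        have hbx : b.1 = (x:ℝ) := by rw [← hxab]
        have hbval : b.2 = (l:ℝ) + 2 := pin s hts b hb hbx hyab
        obtain ⟨rs, hs1, hs2, hs3, ue, we, hor, hue1, hue2, hwe1, hwe2⟩ :=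
          B_nbrs_mid hn (hmem s) (hw.1 s) hb hbx hxe hxmid
        have huemem : ue ∈ ps s := by
          rcases hor with ⟨h1, _⟩ | ⟨_, h2⟩
          · rw [← h1]; exact pt_mem (by omega)
          · rw [← h2]; exact pt_mem (by omega)
        have hwemem : we ∈ ps s := by
          rcases hor with ⟨_, h2⟩ | ⟨h1, _⟩
          · rw [← h2]; exact pt_mem (by omega)
          · rw [← h1]; exact pt_mem (by omega)
        have hueval : ue.2 = (l:ℝ) + 4 := by
          have hgt : (l:ℝ) < ue.2 := hno t s hts _ hkt ue huemem hue1.symm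
          rcases hue2 with h | h
          · rw [h, hbval]; ring
          · exfalso; rw [h, hbval] at hgt; linarith
        have hweval : we.2 = b.2 + (1 + ε) := by
          rcases hwe2 with h | h
          · exact h
          · exfalso
            refine B_squeeze hn hε hε2 hw hmem hno hts hl hq2 ?_
            have : we = ((2*(n:ℝ) - 1, (l:ℝ) + 1 - ε) : ℝ × ℝ) := by
              rw [Prod.ext_iff]
              refine ⟨hwe1, ?_⟩
              rw [h, hbval]; ring
            rw [← this]; exact hwemem
        refine ⟨s, hts, Or.inl ?_⟩
        simp only [Cp, Set.mem_setOf_eq]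
        refine ⟨Or.inr ⟨hj1', hjltn, by omega⟩, Or.inl ⟨rs, hs1, hs2, ?_, ?_, ?_, ?_, ?_⟩⟩
        · rw [hs3, Prod.ext_iff]
          constructor
          · simp only [hiotap]; exact hbx
          · rw [hiotap2, hbval]; push_cast; ring
        · rw [hiotap]; omega
        · rw [hiotap]; omega
        · rw [hiotap]; omega
        · simp only [if_true]
          rw [hs3]
          rcases hor with ⟨h1, h2⟩ | ⟨h1, h2⟩ <;> rw [h1, h2] <;>
            constructor <;> rw [hbval] <;> first
              | (rw [hueval]; linarith)
              | (rw [hweval, hbval]; linarith)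
      · rintro ⟨s, hts, hC | hC⟩ <;> simp only [Cp, Set.mem_setOf_eq] at hC <;>
          left <;> refine ⟨s, hts, ?_⟩ <;> intro hSA
        · rcases hC.2 with ⟨r, _, hr2, hpt, _, _, _, _⟩ | ⟨hCn, _⟩
          · have hmm : pt (ps s) r ∈ ps s := pt_mem (by omega)
            rw [hpt] at hmm
            have h3 := hSA _ hq1p _ hmm (by simp only [hiotap])
            simp only [hiotap2] at h3
            push_cast at h3
            linarith
          · exact hjn hCn
        · rcases hC.2 with ⟨r, _, hr2, hpt, _, _, _, _⟩ | ⟨hCn, _⟩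
          · have hmm : pt (ps s) r ∈ ps s := pt_mem (by omega)
            rw [hpt] at hmm
            have h3 := hSA _ hq1p _ hmm (by simp only [hiotam2] <;> rfl)
            simp only [hiotam2] at h3
            push_cast at h3
            linarith
          · exact hjn hCn
    · -- case j < n - 1
      rw [if_neg hjm] at hrepB
      obtain ⟨hq1, hq1', hmemsplit⟩ := replace1_mem hrepB
      have hxfar1 : x ≠ 2*(n:ℤ) - 2 := fun h => hjm (hmidiff.1 (Or.inl h))
      have hxfar2 : x ≠ 2*(n:ℤ) := fun h => hjm (hmidiff.1 (Or.inr h))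
      -- ps t has points (x-2, l) and (x+2, l)
      have hkt : ∀ cc : ℤ, (cc = x - 2 ∨ cc = x + 2) →
          (((cc:ℝ), (l:ℝ)) : ℝ × ℝ) ∈ ps t := by
        intro cc hcc
        obtain ⟨rt, ht1, ht2, ht3, hcols, hy1, hy2⟩ :=
          B_nbrs_far hn (hmem t) hikt hq1 rfl hxe hx2 hx4 hxfar1 hxfar2
        obtain ⟨rp, hp1, hp2, hp3, hcols', hy1', hy2'⟩ :=
          B_nbrs_far hn hp'P hikt hq1p rfl hxe hx2 hx4 hxfar1 hxfar2
        have hccE : cc % 2 = 0 := by omega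
        refine key_t cc hccE hcc ?_ ?_
        · rcases hcols with ⟨hA, hB⟩ | ⟨hA, hB⟩ <;> rcases hcc with rfl | rfl
          · refine ⟨pt (ps t) (rt-1), pt_mem (by omega), hA, ?_⟩
            rcases hy1 with h | h
            · left; rw [h]; show (l:ℝ) - 2 + 2 = l; ring
            · right; rw [h]; show (l:ℝ) - 2 - 2 = l - 4; ring
          · refine ⟨pt (ps t) (rt+1), pt_mem (by omega), hB, ?_⟩
            rcases hy2 with h | h
            · left; rw [h]; show (l:ℝ) - 2 + 2 = l; ring
            · right; rw [h]; show (l:ℝ) - 2 - 2 = l - 4; ring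
          · refine ⟨pt (ps t) (rt+1), pt_mem (by omega), hB, ?_⟩
            rcases hy2 with h | h
            · left; rw [h]; show (l:ℝ) - 2 + 2 = l; ring
            · right; rw [h]; show (l:ℝ) - 2 - 2 = l - 4; ring
          · refine ⟨pt (ps t) (rt-1), pt_mem (by omega), hA, ?_⟩
            rcases hy1 with h | h
            · left; rw [h]; show (l:ℝ) - 2 + 2 = l; ring
            · right; rw [h]; show (l:ℝ) - 2 - 2 = l - 4; ring
        · rcases hcols' with ⟨hA, hB⟩ | ⟨hA, hB⟩ <;> rcases hcc with rfl | rfl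
          · refine ⟨pt p' (rp-1), pt_mem (by omega), hA, ?_⟩
            rcases hy1' with h | h
            · right; rw [h]; show (l:ℝ) + 2 + 2 = l + 4; ring
            · left; rw [h]; show (l:ℝ) + 2 - 2 = l; ring
          · refine ⟨pt p' (rp+1), pt_mem (by omega), hB, ?_⟩
            rcases hy2' with h | h
            · right; rw [h]; show (l:ℝ) + 2 + 2 = l + 4; ring
            · left; rw [h]; show (l:ℝ) + 2 - 2 = l; ring
          · refine ⟨pt p' (rp+1), pt_mem (by omega), hB, ?_⟩
            rcases hy2' with h | h
            · right; rw [h]; show (l:ℝ) + 2 + 2 = l + 4; ring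
            · left; rw [h]; show (l:ℝ) + 2 - 2 = l; ring
          · refine ⟨pt p' (rp-1), pt_mem (by omega), hA, ?_⟩
            rcases hy1' with h | h
            · right; rw [h]; show (l:ℝ) + 2 + 2 = l + 4; ring
            · left; rw [h]; show (l:ℝ) + 2 - 2 = l; ring
      constructor
      · rintro (⟨s, hts, hs⟩ | ⟨s, hst, hs⟩)
        swap
        · exfalso
          apply hs
          refine SA_low ?_ (hno s t hst)
          intro a ha
          rcases hmemsplit a ha with rfl | hain
          · exact ⟨_, hq1, rfl, by show (l:ℝ) - 2 ≤ (l:ℝ) + 2; linarith⟩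
          · exact ⟨a, hain, rfl, le_refl _⟩
        simp only [StrictlyAbove] at hs
        push_neg at hs
        obtain ⟨a, ha, b, hb, hxab, hyab⟩ := hs
        rcases hmemsplit a ha with rfl | hain
        swap
        · exact absurd (hno t s hts a hain b hb hxab) (not_lt.2 hyab)
        have hbx : b.1 = (x:ℝ) := by rw [← hxab]
        have hbval : b.2 = (l:ℝ) + 2 := pin s hts b hb hbx hyab
        obtain ⟨rs, hs1, hs2, hs3, hcols, hy1, hy2⟩ :=
          B_nbrs_far hn (hmem s) (hw.1 s) hb hbx hxe hx2 hx4 hxfar1 hxfar2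
        have hval1 : (pt (ps s) (rs-1)).2 = (l:ℝ) + 4 := by
          have hcl : ∃ cc : ℤ, (cc = x - 2 ∨ cc = x + 2) ∧
              (pt (ps s) (rs-1)).1 = (cc:ℝ) := by
            rcases hcols with ⟨hA, _⟩ | ⟨hA, _⟩
            · exact ⟨x - 2, Or.inl rfl, hA⟩
            · exact ⟨x + 2, Or.inr rfl, hA⟩
          obtain ⟨cc, hcc, hccx⟩ := hcl
          have hgt : (l:ℝ) < (pt (ps s) (rs-1)).2 :=
            hno t s hts _ (hkt cc hcc) _ (pt_mem (by omega)) hccx.symm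
          rcases hy1 with h | h
          · rw [h, hbval]; ring
          · exfalso; rw [h, hbval] at hgt; linarith
        have hval2 : (pt (ps s) (rs+1)).2 = (l:ℝ) + 4 := by
          have hcl : ∃ cc : ℤ, (cc = x - 2 ∨ cc = x + 2) ∧
              (pt (ps s) (rs+1)).1 = (cc:ℝ) := by
            rcases hcols with ⟨_, hB⟩ | ⟨_, hB⟩
            · exact ⟨x + 2, Or.inr rfl, hB⟩
            · exact ⟨x - 2, Or.inl rfl, hB⟩
          obtain ⟨cc, hcc, hccx⟩ := hcl
          have hgt : (l:ℝ) < (pt (ps s) (rs+1)).2 :=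
            hno t s hts _ (hkt cc hcc) _ (pt_mem (by omega)) hccx.symm
          rcases hy2 with h | h
          · rw [h, hbval]; ring
          · exfalso; rw [h, hbval] at hgt; linarith
        refine ⟨s, hts, Or.inl ?_⟩
        simp only [Cp, Set.mem_setOf_eq]
        refine ⟨Or.inr ⟨hj1', hjltn, by omega⟩, Or.inl ⟨rs, hs1, hs2, ?_, ?_, ?_, ?_, ?_⟩⟩
        · rw [hs3, Prod.ext_iff]
          constructor
          · simp only [hiotap]; exact hbx
          · rw [hiotap2, hbval]; push_cast; ring
        · rw [hiotap]; omega
        · rw [hiotap]; omega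
        · rw [hiotap]; omega
        · simp only [if_true]
          rw [hs3, hbval, hval1, hval2]
          constructor <;> linarith
      · rintro ⟨s, hts, hC | hC⟩ <;> simp only [Cp, Set.mem_setOf_eq] at hC <;>
          left <;> refine ⟨s, hts, ?_⟩ <;> intro hSA
        · rcases hC.2 with ⟨r, _, hr2, hpt, _, _, _, _⟩ | ⟨hCn, _⟩
          · have hmm : pt (ps s) r ∈ ps s := pt_mem (by omega)
            rw [hpt] at hmm
            have h3 := hSA _ hq1p _ hmm (by simp only [hiotap])
            simp only [hiotap2] at h3
            push_cast at h3
            linarith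
          · exact hjn hCn
        · rcases hC.2 with ⟨r, _, hr2, hpt, _, _, _, _⟩ | ⟨hCn, _⟩
          · have hmm : pt (ps s) r ∈ ps s := pt_mem (by omega)
            rw [hpt] at hmm
            have h3 := hSA _ hq1p _ hmm (by simp only [hiotam2] <;> rfl)
            simp only [hiotam2] at h3
            push_cast at h3
            linarith
          · exact hjn hCn

end Stmt7Bmain
section Stmt7BmainRaise

lemma B_raise_iff {n T : ℕ} {ε : ℝ} (hn : 2 ≤ n) (hε : 0 < ε) (hε2 : ε < 1/2)
    {w : Fin T → ℕ × ℤ} (hw : IsSnake (.B n ε) w)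
    {ps : Fin T → List (ℝ × ℝ)} (hmem : ∀ u, ps u ∈ P (.B n ε) (w u).1 (w u).2)
    (hno : NonOverlapping ps) (t : Fin T) {j : ℕ} {l : ℤ}
    (hjl : (j, l) ∈ W (.B n ε)) (p' : List (ℝ × ℝ))
    (hlow : LoweredTo (.B n ε) (w t).1 (w t).2 j l p' (ps t)) :
    ¬ NonOverlapping (Function.update ps t p') ↔
      ∃ s : Fin T, s < t ∧
        ((j, l - (rr (.B n ε) j : ℤ)) ∈ Cp (.B n ε) (ps s) false ∨
         (j, l + (rr (.B n ε) j : ℤ)) ∈ Cp (.B n ε) (ps s) true) := by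
  obtain ⟨hp'P, hptP, hcan, hrep⟩ := hlow
  have hikt : ((w t).1, (w t).2) ∈ XB n := hw.1 t
  have hrepB : (if j = n then
       Replace1 p' (ps t) (2 * (n:ℝ) - 1, (l:ℝ) - 1 - ε) (2 * (n:ℝ) - 1, (l:ℝ) + 1 + ε)
     else if j = n - 1 then
       Replace2 p' (ps t) (((iotaB n (j, l - 2)).1:ℝ), (l:ℝ) - 2)
         (((iotaB n (j, l - 2)).1:ℝ), (l:ℝ) + 2)
         (2 * (n:ℝ) - 1, (l:ℝ) - 1 + ε) (2 * (n:ℝ) - 1, (l:ℝ) + 1 - ε)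
     else
       Replace1 p' (ps t) (((iotaB n (j, l - 2)).1:ℝ), (l:ℝ) - 2)
         (((iotaB n (j, l - 2)).1:ℝ), (l:ℝ) + 2)) := hrep
  have hjlB : (j, l - ((if j = n then 1 else 2 : ℕ):ℤ)) ∈ XB n := hjl
  have hrrB : (rr (.B n ε) j : ℤ) = ((if j = n then 1 else 2 : ℕ):ℤ) := rfl
  rw [not_no_update hno t p']
  by_cases hjn : j = n
  · -- spin case
    rw [if_pos hjn] at hrepB hjlB
    rw [hrrB, if_pos hjn]
    have hl : l % 2 = 0 := by
      rcases hjlB with ⟨_, hpar⟩ | ⟨_, hj2, _⟩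
      · omega
      · omega
    obtain ⟨hq'_mem, hq_mem, hmemsplit⟩ := replace1_mem (replace1_symm hrepB)
    -- hq'_mem : (2n-1, l+1+ε) ∈ ps t ; hq_mem : (2n-1, l-1-ε) ∈ p'
    have clash : ∀ s : Fin T, s < t → ((2*(n:ℝ) - 1, (l:ℝ) - 1 - ε) : ℝ × ℝ) ∈ ps s → False := by
      intro s hst hmem2
      obtain ⟨M2, s2, c2, hs2, hval2, hM2odd, hc2, hnb2⟩ :=
        B_spinpt hn (hmem s) (hw.1 s) hmem2 rfl
      have hval2' : (l:ℝ) - 1 - ε = (M2:ℝ) + s2*ε := hval2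
      obtain ⟨hM2, hs2v⟩ := uniq_eps hε hε2 (Or.inr rfl) hs2
        (show ((l-1:ℤ):ℝ) + ((-1:ℤ):ℝ)*ε = (M2:ℝ) + s2*ε by rw [← hval2']; push_cast; ring)
      obtain ⟨Mt, st, ct, hst', hvalt, hMtodd, hct, hnbt⟩ :=
        B_spinpt hn (hmem t) hikt hq'_mem rfl
      have hvalt' : (l:ℝ) + 1 + ε = (Mt:ℝ) + st*ε := hvalt
      obtain ⟨hMt, hstv⟩ := uniq_eps hε hε2 (Or.inl rfl) hst'
        (show ((l+1:ℤ):ℝ) + ((1:ℤ):ℝ)*ε = (Mt:ℝ) + st*ε by rw [← hvalt']; push_cast; ring)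
      have hceq : c2 = ct := by omega
      have hyt : ((Mt - st:ℤ):ℝ) = (l:ℝ) := by rw [← hMt, ← hstv]; push_cast; ring
      have hy2 : ((M2 - s2:ℤ):ℝ) = (l:ℝ) := by rw [← hM2, ← hs2v]; push_cast; ring
      have := hno s t hst _ hnb2 _ hnbt (by rw [hceq])
      rw [hyt, hy2] at this
      exact lt_irrefl _ this
    constructor
    · rintro (⟨s, hts, hs⟩ | ⟨s, hst, hs⟩)
      · exfalso
        apply hs
        refine SA_high ?_ (hno t s hts)
        intro a ha
        rcases hmemsplit a ha with rfl | hain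
        · exact ⟨_, hq'_mem, rfl, by
            show (l:ℝ) - 1 - ε ≤ (l:ℝ) + 1 + ε; linarith⟩
        · exact ⟨a, hain, rfl, le_refl _⟩
      simp only [StrictlyAbove] at hs
      push_neg at hs
      obtain ⟨a, ha, b, hb, hxab, hyab⟩ := hs
      rcases hmemsplit b hb with rfl | hbin
      swap
      · exact absurd (hno s t hst a ha b hbin hxab) (not_lt.2 hyab)
      have hax : a.1 = 2*(n:ℝ) - 1 := hxab
      obtain ⟨M, s0, c0, hs0, hval, hModd, hc0, hnb⟩ := B_spinpt hn (hmem s) (hw.1 s) ha hax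
      have hbup : a.2 < (l:ℝ) + 1 + ε := hno s t hst a ha _ hq'_mem hxab
      have hblow : (l:ℝ) - 1 - ε ≤ a.2 := hyab
      have hse : (s0:ℝ)*ε ≤ ε ∧ -ε ≤ (s0:ℝ)*ε := by
        rcases hs0 with rfl | rfl <;> constructor <;> push_cast <;> linarith
      have hMrange : M = l - 1 ∨ M = l + 1 := by
        rw [hval] at hblow hbup
        have hlo : l - 1 ≤ M := by
          by_contra hcon
          push_neg at hcon
          have : (M:ℝ) ≤ (l:ℝ) - 2 := by exact_mod_cast (by omega : M ≤ l - 2)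
          linarith [hse.1]
        have hhi : M ≤ l + 1 := by
          by_contra hcon
          push_neg at hcon
          have : (l:ℝ) + 2 ≤ (M:ℝ) := by exact_mod_cast (by omega : l + 2 ≤ M)
          linarith [hse.2]
        omega
      have hbpt : a = (2*(n:ℝ) - 1, (M:ℝ) + s0*ε) := Prod.ext_iff.2 ⟨hax, hval⟩
      rcases hMrange with hM | hM <;> rcases hs0 with hsv | hsv
      · -- M = l-1, s0 = 1 : lower corner at (n, l-1)
        refine ⟨s, hst, Or.inl ?_⟩
        simp only [Cp, Set.mem_setOf_eq]
        refine ⟨Or.inl ⟨hjn, by omega⟩, Or.inr ⟨hjn, ?_⟩⟩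
        simp only [Bool.false_eq_true, if_false]
        constructor
        · have heq : ((2*(n:ℝ) - 1, ((l - ((1:ℕ):ℤ):ℤ):ℝ) + ε) : ℝ × ℝ) = a := by
            rw [hbpt, hM, hsv, Prod.ext_iff]; exact ⟨rfl, by push_cast; ring⟩
          rw [heq]; exact ha
        · intro hcon
          refine clash s hst ?_
          have heq : ((2*(n:ℝ) - 1, (l:ℝ) - 1 - ε) : ℝ × ℝ) =
              (2*(n:ℝ) - 1, ((l - ((1:ℕ):ℤ):ℤ):ℝ) - ε) := by
            rw [Prod.ext_iff]; exact ⟨rfl, by push_cast; ring⟩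
          rw [heq]; exact hcon
      · -- M = l-1, s0 = -1 : clash
        exfalso
        apply clash s hst
        have heq : a = ((2*(n:ℝ) - 1, (l:ℝ) - 1 - ε) : ℝ × ℝ) := by
          rw [hbpt, hM, hsv, Prod.ext_iff]; exact ⟨rfl, by push_cast; ring⟩
        rw [← heq]; exact ha
      · -- M = l+1, s0 = 1 : contradiction with strictness
        exfalso
        rw [hval, hM, hsv] at hbup
        push_cast at hbup
        linarith
      · -- M = l+1, s0 = -1 : upper corner at (n, l+1)
        refine ⟨s, hst, Or.inr ?_⟩
        simp only [Cp, Set.mem_setOf_eq]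
        refine ⟨Or.inl ⟨hjn, by omega⟩, Or.inr ⟨hjn, ?_⟩⟩
        simp only [if_true]
        constructor
        · have heq : ((2*(n:ℝ) - 1, ((l + ((1:ℕ):ℤ):ℤ):ℝ) - ε) : ℝ × ℝ) = a := by
            rw [hbpt, hM, hsv, Prod.ext_iff]; exact ⟨rfl, by push_cast; ring⟩
          rw [heq]; exact ha
        · intro hcon
          have heq : ((2*(n:ℝ) - 1, ((l + ((1:ℕ):ℤ):ℤ):ℝ) + ε) : ℝ × ℝ) =
              ((2*(n:ℝ) - 1, (l:ℝ) + 1 + ε) : ℝ × ℝ) := by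
            rw [Prod.ext_iff]; exact ⟨rfl, by push_cast; ring⟩
          rw [heq] at hcon
          have h2 := hno s t hst _ hcon _ hq'_mem rfl
          simp only at h2
          linarith
    · rintro ⟨s, hst, hC | hC⟩ <;> simp only [Cp, Set.mem_setOf_eq] at hC <;>
        right <;> refine ⟨s, hst, ?_⟩ <;> intro hSA
      · rcases hC.2 with ⟨r, _, _, _, _, hne, _, _⟩ | ⟨_, hC2⟩
        · exact hne (by simp [iotaB, hjn])
        · simp only [Bool.false_eq_true, if_false] at hC2
          have h3 := hSA _ hC2.1 _ hq_mem rfl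
          simp only at h3
          push_cast at h3
          linarith
      · rcases hC.2 with ⟨r, _, _, _, _, hne, _, _⟩ | ⟨_, hC2⟩
        · exact hne (by simp [iotaB, hjn])
        · simp only [if_true] at hC2
          have h3 := hSA _ hC2.1 _ hq_mem rfl
          simp only at h3
          push_cast at h3
          linarith
  · -- even cases (j < n)
    rw [if_neg hjn] at hrepB hjlB
    rw [hrrB, if_neg hjn]
    simp only [Nat.cast_ofNat]
    have hj1' : 1 ≤ j := by
      rcases hjlB with ⟨hjq, _⟩ | ⟨h1, h2, h3⟩
      · exact absurd hjq hjn
      · exact h1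
    have hjltn : j < n := by
      rcases hjlB with ⟨hjq, _⟩ | ⟨h1, h2, h3⟩
      · exact absurd hjq hjn
      · exact h2
    have hl : l % 2 = 0 := by
      rcases hjlB with ⟨hjq, _⟩ | ⟨h1, h2, h3⟩
      · exact absurd hjq hjn
      · omega
    obtain ⟨hxor, hiotap, hiotam2, hiotap2⟩ := iota_facts (l := l) hn hj1' hjltn
    set x : ℤ := (iotaB n (j, l - 2)).1 with hxdef
    have hnn : (2:ℤ) ≤ (n:ℤ) := by exact_mod_cast hn
    have hjn' : (j:ℤ) < (n:ℤ) := by exact_mod_cast hjltn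
    have hjz : 1 ≤ (j:ℤ) := by exact_mod_cast hj1'
    have hxe : x % 2 = 0 := by omega
    have hx2 : 2 ≤ x := by omega
    have hx4 : x ≤ 4*(n:ℤ) - 4 := by omega
    have hmidiff : (x = 2*(n:ℤ) - 2 ∨ x = 2*(n:ℤ)) ↔ j = n - 1 := by
      have hc : ((n - 1 : ℕ):ℤ) = (n:ℤ) - 1 := by
        push_cast [Nat.cast_sub (by omega : 1 ≤ n)]; ring
      constructor
      · intro h
        have h2 : (j:ℤ) = ((n - 1:ℕ):ℤ) := by
          rw [hc]
          rcases hxor with hx | hx <;> rcases h with h | h <;> omega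
        exact_mod_cast h2
      · intro h
        have h2 : (j:ℤ) = ((n - 1:ℕ):ℤ) := by exact_mod_cast h
        rw [hc] at h2
        rcases hxor with hx | hx
        · left; omega
        · right; omega
    have hq1t : (((x:ℝ), (l:ℝ) + 2) : ℝ × ℝ) ∈ ps t := by
      by_cases hjm : j = n - 1
      · rw [if_pos hjm] at hrepB
        exact (replace2_mem hrepB).2.2.1
      · rw [if_neg hjm] at hrepB
        exact (replace1_mem hrepB).2.1
    have hq1p : (((x:ℝ), (l:ℝ) - 2) : ℝ × ℝ) ∈ p' := by
      by_cases hjm : j = n - 1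
      · rw [if_pos hjm] at hrepB
        exact (replace2_mem hrepB).1
      · rw [if_neg hjm] at hrepB
        exact (replace1_mem hrepB).1
    have hclt : (l + 2) % 4 = (2*(n:ℤ) + 2 + x) % 4 := by
      obtain ⟨mt, hmt, hmtmod⟩ := B_evenpt hn (hmem t) hikt hq1t rfl hxe
      have : mt = l + 2 := by
        have h2 : (mt:ℝ) = (l:ℝ) + 2 := by rw [← hmt]
        exact_mod_cast h2
      omega
    have pin : ∀ s : Fin T, s < t → ∀ b, b ∈ ps s → b.1 = (x:ℝ) → (l:ℝ) - 2 ≤ b.2 →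
        b.2 = (l:ℝ) - 2 := by
      intro s hst b hb hbx hblow
      obtain ⟨m, hm, hmmod⟩ := B_evenpt hn (hmem s) (hw.1 s) hb hbx hxe
      have hbup : b.2 < (l:ℝ) + 2 := hno s t hst b hb _ hq1t hbx
      rw [hm] at hblow hbup ⊢
      have h1 : l - 2 ≤ m := by exact_mod_cast hblow
      have h2 : m < l + 2 := by exact_mod_cast hbup
      have : m = l - 2 := by omega
      rw [this]; push_cast; ring
    have key_t : ∀ c : ℤ, c % 2 = 0 → (c = x - 2 ∨ c = x + 2) →
        (∃ u, u ∈ ps t ∧ u.1 = (c:ℝ) ∧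
          (u.2 = (l:ℝ) ∨ u.2 = (l:ℝ) + 4)) → (∃ u', u' ∈ p' ∧ u'.1 = (c:ℝ) ∧
          (u'.2 = (l:ℝ) ∨ u'.2 = (l:ℝ) - 4)) → (((c:ℝ), (l:ℝ)) : ℝ × ℝ) ∈ ps t := by
      intro c hce hcc ⟨u, hu, hux, huy⟩ ⟨u', hu', hux', huy'⟩
      have hcx : c ≠ x := by omega
      have hu'in : u' ∈ ps t := by
        by_cases hjm : j = n - 1
        · rw [if_pos hjm] at hrepB
          rcases (replace2_mem (replace2_symm hrepB)).2.2.2.2 u' hu' with rfl | rfl | h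
          · exfalso
            have h9 : ((x:ℝ)) = (c:ℝ) := hux'
            exact hcx (by exact_mod_cast h9.symm)
          · exfalso
            have h2 : (2*(n:ℝ) - 1) = (c:ℝ) := hux'
            have h3 : ((2*(n:ℤ) - 1 : ℤ):ℝ) = (c:ℝ) := by push_cast; linarith
            have : (2*(n:ℤ) - 1) = c := by exact_mod_cast h3
            omega
          · exact h
        · rw [if_neg hjm] at hrepB
          rcases (replace1_mem (replace1_symm hrepB)).2.2 u' hu' with rfl | h
          · exfalso
            have h9 : ((x:ℝ)) = (c:ℝ) := hux'
            exact hcx (by exact_mod_cast h9.symm)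
          · exact h
      have huu : u = u' := B_even_unique hn (hmem t) hikt hu hu'in hux hux' hce
      have huy2 : u.2 = (l:ℝ) := by
        rcases huy with h | h
        · exact h
        · exfalso
          rw [huu] at h
          rcases huy' with h' | h' <;> rw [h'] at h <;> linarith
      have : (((c:ℝ), (l:ℝ)) : ℝ × ℝ) = u := by
        rw [Prod.ext_iff]
        exact ⟨hux.symm, huy2.symm⟩
      rw [this]; exact hu
    by_cases hjm : j = n - 1
    · -- case j = n - 1
      rw [if_pos hjm] at hrepB
      obtain ⟨hq1, hq2, hq1', hq2', hmemsplit⟩ := replace2_mem (replace2_symm hrepB)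
      -- hq1 : (x, l+2) ∈ ps t ; hq2 : (2n-1, l+1-ε) ∈ ps t ; hq1' : (x, l-2) ∈ p' ;
      -- hq2' : (2n-1, l-1+ε) ∈ p'
      have hxmid : x = 2*(n:ℤ) - 2 ∨ x = 2*(n:ℤ) := hmidiff.2 hjm
      set c : ℤ := if x = 2*(n:ℤ) - 2 then x - 2 else x + 2 with hcdef
      have hce : c % 2 = 0 := by
        by_cases hcc : x = 2*(n:ℤ) - 2
        · rw [hcdef, if_pos hcc]; omega
        · rw [hcdef, if_neg hcc]; omega
      have hkt : (((c:ℝ), (l:ℝ)) : ℝ × ℝ) ∈ ps t := by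
        obtain ⟨rt, ht1, ht2, ht3, ue, we, hor, hue1, hue2, hwe1, hwe2⟩ :=
          B_nbrs_mid hn (hmem t) hikt hq1 rfl hxe hxmid
        obtain ⟨rp, hp1, hp2, hp3, ue', we', hor', hue1', hue2', hwe1', hwe2'⟩ :=
          B_nbrs_mid hn hp'P hikt hq1p rfl hxe hxmid
        have hccd : c = x - 2 ∨ c = x + 2 := by
          by_cases hcc : x = 2*(n:ℤ) - 2
          · rw [hcdef, if_pos hcc]; left; rfl
          · rw [hcdef, if_neg hcc]; right; rfl
        refine key_t c hce hccd ⟨ue, ?_, hue1, ?_⟩ ⟨ue', ?_, hue1', ?_⟩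
        · rcases hor with ⟨h1, _⟩ | ⟨_, h2⟩
          · rw [← h1]; exact pt_mem (by omega)
          · rw [← h2]; exact pt_mem (by omega)
        · rcases hue2 with h | h
          · right; rw [h]; show (l:ℝ) + 2 + 2 = l + 4; ring
          · left; rw [h]; show (l:ℝ) + 2 - 2 = l; ring
        · rcases hor' with ⟨h1, _⟩ | ⟨_, h2⟩
          · rw [← h1]; exact pt_mem (by omega)
          · rw [← h2]; exact pt_mem (by omega)
        · rcases hue2' with h | h
          · left; rw [h]; show (l:ℝ) - 2 + 2 = l; ring
          · right; rw [h]; show (l:ℝ) - 2 - 2 = l - 4; ring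
      constructor
      · rintro (⟨s, hts, hs⟩ | ⟨s, hst, hs⟩)
        · exfalso
          apply hs
          refine SA_high ?_ (hno t s hts)
          intro a ha
          rcases hmemsplit a ha with rfl | rfl | hain
          · exact ⟨_, hq1, rfl, by show (l:ℝ) - 2 ≤ (l:ℝ) + 2; linarith⟩
          · exact ⟨_, hq2, rfl, by show (l:ℝ) - 1 + ε ≤ (l:ℝ) + 1 - ε; linarith⟩
          · exact ⟨a, hain, rfl, le_refl _⟩
        simp only [StrictlyAbove] at hs
        push_neg at hs
        obtain ⟨a, ha, b, hb, hxab, hyab⟩ := hs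
        rcases hmemsplit b hb with rfl | rfl | hbin
        swap
        · -- violation through the spin column : impossible by the squeeze
          exfalso
          have hax : a.1 = 2*(n:ℝ) - 1 := hxab
          have hbup : a.2 < (l:ℝ) + 1 - ε := hno s t hst a ha _ hq2 hxab
          have hblow : (l:ℝ) - 1 + ε ≤ a.2 := hyab
          obtain ⟨M, s0, c0, hs0, hval, hModd, hc0, hnb⟩ :=
            B_spinpt hn (hmem s) (hw.1 s) ha hax
          rcases lt_or_eq_of_le hblow with hlt | heqv
          · rw [hval] at hbup hlt
            exact no_mid hε hε2 hModd hl hs0 hlt hbup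
          · refine B_squeeze hn hε hε2 hw hmem hno hst hl ?_ hq2
            have : a = ((2*(n:ℝ) - 1, (l:ℝ) - 1 + ε) : ℝ × ℝ) := by
              rw [Prod.ext_iff]; exact ⟨hax, heqv.symm⟩
            rw [← this]; exact ha
        swap
        · exact absurd (hno s t hst a ha b hbin hxab) (not_lt.2 hyab)
        -- violation through column x
        have hax : a.1 = (x:ℝ) := hxab
        have haval : a.2 = (l:ℝ) - 2 := pin s hst a ha hax hyab
        obtain ⟨rs, hs1, hs2, hs3, ue, we, hor, hue1, hue2, hwe1, hwe2⟩ :=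
          B_nbrs_mid hn (hmem s) (hw.1 s) ha hax hxe hxmid
        have huemem : ue ∈ ps s := by
          rcases hor with ⟨h1, _⟩ | ⟨_, h2⟩
          · rw [← h1]; exact pt_mem (by omega)
          · rw [← h2]; exact pt_mem (by omega)
        have hwemem : we ∈ ps s := by
          rcases hor with ⟨_, h2⟩ | ⟨h1, _⟩
          · rw [← h2]; exact pt_mem (by omega)
          · rw [← h1]; exact pt_mem (by omega)
        have hueval : ue.2 = (l:ℝ) - 4 := by
          have hgt : ue.2 < (l:ℝ) := hno s t hst ue huemem _ hkt hue1
          rcases hue2 with h | h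
          · exfalso; rw [h, haval] at hgt; linarith
          · rw [h, haval]; ring
        have hweval : we.2 = a.2 - (1 + ε) := by
          rcases hwe2 with h | h
          · exfalso
            refine B_squeeze hn hε hε2 hw hmem hno hst hl ?_ hq2
            have : we = ((2*(n:ℝ) - 1, (l:ℝ) - 1 + ε) : ℝ × ℝ) := by
              rw [Prod.ext_iff]
              refine ⟨hwe1, ?_⟩
              rw [h, haval]; ring
            rw [← this]; exact hwemem
          · exact h
        refine ⟨s, hst, Or.inl ?_⟩
        simp only [Cp, Set.mem_setOf_eq]
        refine ⟨Or.inr ⟨hj1', hjltn, by omega⟩, Or.inl ⟨rs, hs1, hs2, ?_, ?_, ?_, ?_, ?_⟩⟩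
        · rw [hs3, Prod.ext_iff]
          constructor
          · simp only [hiotam2]; exact hax
          · rw [hiotam2, haval]; push_cast; ring
        · omega
        · omega
        · omega
        · simp only [Bool.false_eq_true, if_false]
          rw [hs3]
          rcases hor with ⟨h1, h2⟩ | ⟨h1, h2⟩ <;> rw [h1, h2] <;>
            constructor <;> rw [haval] <;> first
              | (rw [hueval]; linarith)
              | (rw [hweval, haval]; linarith)
      · rintro ⟨s, hst, hC | hC⟩ <;> simp only [Cp, Set.mem_setOf_eq] at hC <;>
          right <;> refine ⟨s, hst, ?_⟩ <;> intro hSA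
        · rcases hC.2 with ⟨r, _, hr2, hpt, _, _, _, _⟩ | ⟨hCn, _⟩
          · have hmm : pt (ps s) r ∈ ps s := pt_mem (by omega)
            rw [hpt] at hmm
            have h3 := hSA _ hmm _ hq1p (by simp only [hiotam2] <;> rfl)
            simp only [hiotam2] at h3
            push_cast at h3
            linarith
          · exact hjn hCn
        · rcases hC.2 with ⟨r, _, hr2, hpt, _, _, _, _⟩ | ⟨hCn, _⟩
          · have hmm : pt (ps s) r ∈ ps s := pt_mem (by omega)
            rw [hpt] at hmm
            have h3 := hSA _ hmm _ hq1p (by simp only [hiotap])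
            simp only [hiotap2] at h3
            push_cast at h3
            linarith
          · exact hjn hCn
    · -- case j < n - 1
      rw [if_neg hjm] at hrepB
      obtain ⟨hq1, hq1', hmemsplit⟩ := replace1_mem (replace1_symm hrepB)
      -- hq1 : (x, l+2) ∈ ps t ; hq1' : (x, l-2) ∈ p'
      have hxfar1 : x ≠ 2*(n:ℤ) - 2 := fun h => hjm (hmidiff.1 (Or.inl h))
      have hxfar2 : x ≠ 2*(n:ℤ) := fun h => hjm (hmidiff.1 (Or.inr h))
      have hkt : ∀ cc : ℤ, (cc = x - 2 ∨ cc = x + 2) →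
          (((cc:ℝ), (l:ℝ)) : ℝ × ℝ) ∈ ps t := by
        intro cc hcc
        obtain ⟨rt, ht1, ht2, ht3, hcols, hy1, hy2⟩ :=
          B_nbrs_far hn (hmem t) hikt hq1 rfl hxe hx2 hx4 hxfar1 hxfar2
        obtain ⟨rp, hp1, hp2, hp3, hcols', hy1', hy2'⟩ :=
          B_nbrs_far hn hp'P hikt hq1p rfl hxe hx2 hx4 hxfar1 hxfar2
        have hccE : cc % 2 = 0 := by omega
        refine key_t cc hccE hcc ?_ ?_
        · rcases hcols with ⟨hA, hB⟩ | ⟨hA, hB⟩ <;> rcases hcc with rfl | rfl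
          · refine ⟨pt (ps t) (rt-1), pt_mem (by omega), hA, ?_⟩
            rcases hy1 with h | h
            · right; rw [h]; show (l:ℝ) + 2 + 2 = l + 4; ring
            · left; rw [h]; show (l:ℝ) + 2 - 2 = l; ring
          · refine ⟨pt (ps t) (rt+1), pt_mem (by omega), hB, ?_⟩
            rcases hy2 with h | h
            · right; rw [h]; show (l:ℝ) + 2 + 2 = l + 4; ring
            · left; rw [h]; show (l:ℝ) + 2 - 2 = l; ring
          · refine ⟨pt (ps t) (rt+1), pt_mem (by omega), hB, ?_⟩
            rcases hy2 with h | h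
            · right; rw [h]; show (l:ℝ) + 2 + 2 = l + 4; ring
            · left; rw [h]; show (l:ℝ) + 2 - 2 = l; ring
          · refine ⟨pt (ps t) (rt-1), pt_mem (by omega), hA, ?_⟩
            rcases hy1 with h | h
            · right; rw [h]; show (l:ℝ) + 2 + 2 = l + 4; ring
            · left; rw [h]; show (l:ℝ) + 2 - 2 = l; ring
        · rcases hcols' with ⟨hA, hB⟩ | ⟨hA, hB⟩ <;> rcases hcc with rfl | rfl
          · refine ⟨pt p' (rp-1), pt_mem (by omega), hA, ?_⟩
            rcases hy1' with h | h
            · left; rw [h]; show (l:ℝ) - 2 + 2 = l; ring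
            · right; rw [h]; show (l:ℝ) - 2 - 2 = l - 4; ring
          · refine ⟨pt p' (rp+1), pt_mem (by omega), hB, ?_⟩
            rcases hy2' with h | h
            · left; rw [h]; show (l:ℝ) - 2 + 2 = l; ring
            · right; rw [h]; show (l:ℝ) - 2 - 2 = l - 4; ring
          · refine ⟨pt p' (rp+1), pt_mem (by omega), hB, ?_⟩
            rcases hy2' with h | h
            · left; rw [h]; show (l:ℝ) - 2 + 2 = l; ring
            · right; rw [h]; show (l:ℝ) - 2 - 2 = l - 4; ring
          · refine ⟨pt p' (rp-1), pt_mem (by omega), hA, ?_⟩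
            rcases hy1' with h | h
            · left; rw [h]; show (l:ℝ) - 2 + 2 = l; ring
            · right; rw [h]; show (l:ℝ) - 2 - 2 = l - 4; ring
      constructor
      · rintro (⟨s, hts, hs⟩ | ⟨s, hst, hs⟩)
        · exfalso
          apply hs
          refine SA_high ?_ (hno t s hts)
          intro a ha
          rcases hmemsplit a ha with rfl | hain
          · exact ⟨_, hq1, rfl, by show (l:ℝ) - 2 ≤ (l:ℝ) + 2; linarith⟩
          · exact ⟨a, hain, rfl, le_refl _⟩
        simp only [StrictlyAbove] at hs
        push_neg at hs
        obtain ⟨a, ha, b, hb, hxab, hyab⟩ := hs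
        rcases hmemsplit b hb with rfl | hbin
        swap
        · exact absurd (hno s t hst a ha b hbin hxab) (not_lt.2 hyab)
        have hax : a.1 = (x:ℝ) := hxab
        have haval : a.2 = (l:ℝ) - 2 := pin s hst a ha hax hyab
        obtain ⟨rs, hs1, hs2, hs3, hcols, hy1, hy2⟩ :=
          B_nbrs_far hn (hmem s) (hw.1 s) ha hax hxe hx2 hx4 hxfar1 hxfar2
        have hval1 : (pt (ps s) (rs-1)).2 = (l:ℝ) - 4 := by
          have hcl : ∃ cc : ℤ, (cc = x - 2 ∨ cc = x + 2) ∧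
              (pt (ps s) (rs-1)).1 = (cc:ℝ) := by
            rcases hcols with ⟨hA, _⟩ | ⟨hA, _⟩
            · exact ⟨x - 2, Or.inl rfl, hA⟩
            · exact ⟨x + 2, Or.inr rfl, hA⟩
          obtain ⟨cc, hcc, hccx⟩ := hcl
          have hgt : (pt (ps s) (rs-1)).2 < (l:ℝ) :=
            hno s t hst _ (pt_mem (by omega)) _ (hkt cc hcc) hccx
          rcases hy1 with h | h
          · exfalso; rw [h, haval] at hgt; linarith
          · rw [h, haval]; ring
        have hval2 : (pt (ps s) (rs+1)).2 = (l:ℝ) - 4 := by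
          have hcl : ∃ cc : ℤ, (cc = x - 2 ∨ cc = x + 2) ∧
              (pt (ps s) (rs+1)).1 = (cc:ℝ) := by
            rcases hcols with ⟨_, hB⟩ | ⟨_, hB⟩
            · exact ⟨x + 2, Or.inr rfl, hB⟩
            · exact ⟨x - 2, Or.inl rfl, hB⟩
          obtain ⟨cc, hcc, hccx⟩ := hcl
          have hgt : (pt (ps s) (rs+1)).2 < (l:ℝ) :=
            hno s t hst _ (pt_mem (by omega)) _ (hkt cc hcc) hccx
          rcases hy2 with h | h
          · exfalso; rw [h, haval] at hgt; linarith
          · rw [h, haval]; ring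
        refine ⟨s, hst, Or.inl ?_⟩
        simp only [Cp, Set.mem_setOf_eq]
        refine ⟨Or.inr ⟨hj1', hjltn, by omega⟩, Or.inl ⟨rs, hs1, hs2, ?_, ?_, ?_, ?_, ?_⟩⟩
        · rw [hs3, Prod.ext_iff]
          constructor
          · simp only [hiotam2]; exact hax
          · rw [hiotam2, haval]; push_cast; ring
        · omega
        · omega
        · omega
        · simp only [Bool.false_eq_true, if_false]
          rw [hs3, haval, hval1, hval2]
          constructor <;> linarith
      · rintro ⟨s, hst, hC | hC⟩ <;> simp only [Cp, Set.mem_setOf_eq] at hC <;>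
          right <;> refine ⟨s, hst, ?_⟩ <;> intro hSA
        · rcases hC.2 with ⟨r, _, hr2, hpt, _, _, _, _⟩ | ⟨hCn, _⟩
          · have hmm : pt (ps s) r ∈ ps s := pt_mem (by omega)
            rw [hpt] at hmm
            have h3 := hSA _ hmm _ hq1p (by simp only [hiotam2] <;> rfl)
            simp only [hiotam2] at h3
            push_cast at h3
            linarith
          · exact hjn hCn
        · rcases hC.2 with ⟨r, _, hr2, hpt, _, _, _, _⟩ | ⟨hCn, _⟩
          · have hmm : pt (ps s) r ∈ ps s := pt_mem (by omega)
            rw [hpt] at hmm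
            have h3 := hSA _ hmm _ hq1p (by simp only [hiotap])
            simp only [hiotap2] at h3
            push_cast at h3
            linarith
          · exact hjn hCn

end Stmt7BmainRaise
/-- suppose `p_t` can be lowered (resp. raised) at `(j,ℓ) ∈ W`; the tuple
obtained by replacing `p_t` with its lowered (resp. raised) version fails to be
non-overlapping iff some later (resp. earlier) path `p_s` has an upper corner at
`(j, ℓ+r_j)` or a lower corner at `(j, ℓ-r_j)`. -/
theorem stmt7 (S : Setting) (hS : S.valid) {T : ℕ} (hT : 1 ≤ T)
    (w : Fin T → ℕ × ℤ) (hw : IsSnake S w)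
    (ps : Fin T → List (ℝ × ℝ)) (hps : ps ∈ PBar S w)
    (t : Fin T) (j : ℕ) (l : ℤ) (hjl : (j, l) ∈ W S) :
    (∀ p' : List (ℝ × ℝ), LoweredTo S (w t).1 (w t).2 j l (ps t) p' →
      (¬ NonOverlapping (Function.update ps t p') ↔
        ∃ s : Fin T, t < s ∧
          ((j, l + (rr S j : ℤ)) ∈ Cp S (ps s) true ∨
           (j, l - (rr S j : ℤ)) ∈ Cp S (ps s) false))) ∧
    (∀ p' : List (ℝ × ℝ), LoweredTo S (w t).1 (w t).2 j l p' (ps t) →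
      (¬ NonOverlapping (Function.update ps t p') ↔
        ∃ s : Fin T, s < t ∧
          ((j, l - (rr S j : ℤ)) ∈ Cp S (ps s) false ∨
           (j, l + (rr S j : ℤ)) ∈ Cp S (ps s) true))) := by
  obtain ⟨hmem, hno⟩ := hps
  cases S with
  | A n =>
    constructor
    · intro p' h
      have h2 := A_lower_iff hw hmem hno t hjl p' h
      simpa [rr] using h2
    · intro p' h
      have h2 := A_raise_iff hw hmem hno t hjl p' h
      simpa [rr] using h2
  | B n ε =>
    obtain ⟨hn, hε, hε2⟩ := hS
    exact ⟨fun p' h => B_lower_iff hn hε hε2 hw hmem hno t hjl p' h,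
           fun p' h => B_raise_iff hn hε hε2 hw hmem hno t hjl p' h⟩

end Paper
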